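/- arXiv:2401.02067 — 6 statements merged into one kernel-verified Lean document; each statement's English description precedes it below -/
import Mathlib

section
/- Let k be a Brauer field and let K/k be a field extension such that, for every integer d ≥ 1, the quotient group K^× / (k^× · (K^×)^d) is finite. Then K is a Brauer field. Moreover, if that quotient for exponent d has cardinality n and m = N_k(d), then N_K(d) ≤ n·m. -/
/-- `IsBrauerBound k d N` : every diagonal equation of degree `d` in more than `N`
variables over `k` has a nontrivial solution. -/
def IsBrauerBound (k : Type*) [Field k] (d N : ℕ) : Prop :=
  ∀ n : ℕ, N < n → ∀ a : Fin n → k,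
    ∃ x : Fin n → k, x ≠ 0 ∧ ∑ i, a i * x i ^ d = 0

/-- A field `k` is a *Brauer field* if for every `d ≥ 1` there is a Brauer bound. -/
def IsBrauerField (k : Type*) [Field k] : Prop :=
  ∀ d : ℕ, 1 ≤ d → ∃ N : ℕ, IsBrauerBound k d N

/-- `N_k(d)` : the least Brauer bound for degree `d` over `k`. -/
noncomputable def brauerConst (k : Type*) [Field k] (d : ℕ) : ℕ :=
  sInf {N | IsBrauerBound k d N}

/-- The subgroup `k^× · (K^×)^d` of `K^×`. -/
def mixedPowerSubgroup (k K : Type*) [Field k] [Field K] [Algebra k K] (d : ℕ) :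
    Subgroup Kˣ :=
  (Units.map (algebraMap k K).toMonoidHom).range ⊔ (powMonoidHom d : Kˣ →* Kˣ).range

/-- If `k` is a Brauer field and `K/k` is a field extension with
`K^×/(k^× · (K^×)^d)` finite for every `d ≥ 1`, then `K` is a Brauer field; moreover, if
that quotient for exponent `d` has cardinality `n` and `m = N_k(d)`, then `N_K(d) ≤ n·m`. -/
theorem isBrauerField_of_finite_mixed_power_classes (k K : Type*) [Field k] [Field K]
    [Algebra k K] (hk : IsBrauerField k)
    (hfin : ∀ d : ℕ, 1 ≤ d → Finite (Kˣ ⧸ mixedPowerSubgroup k K d)) :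
    IsBrauerField K ∧
      ∀ d : ℕ, 1 ≤ d →
        IsBrauerBound K d (Nat.card (Kˣ ⧸ mixedPowerSubgroup k K d) * brauerConst k d) := by
  have main : ∀ d : ℕ, 1 ≤ d →
      IsBrauerBound K d (Nat.card (Kˣ ⧸ mixedPowerSubgroup k K d) * brauerConst k d) := by
    intro d hd N hN a
    have hd0 : d ≠ 0 := by omega
    -- case: some coefficient is zero
    by_cases hz : ∃ i : Fin N, a i = 0
    · obtain ⟨i, hi⟩ := hz
      classical
      refine ⟨fun j => if j = i then 1 else 0, ?_, ?_⟩
      · intro h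
        have := congrFun h i
        simp at this
      · rw [Finset.sum_eq_single i]
        · simp [hi]
        · intro b _ hb
          simp [hb, hd0]
        · simp
    push_neg at hz
    classical
    set Q := Kˣ ⧸ mixedPowerSubgroup k K d with hQ
    have : Finite Q := hfin d hd
    have : Fintype Q := Fintype.ofFinite Q
    set m := brauerConst k d with hmdef
    have hm : IsBrauerBound k d m := Nat.sInf_mem (hk d hd)
    -- units
    set u : Fin N → Kˣ := fun i => Units.mk0 (a i) (hz i) with hu
    set f : Fin N → Q := fun i => QuotientGroup.mk (u i) with hf
    -- pigeonhole
    have hcard : (Finset.univ : Finset Q).card * m < (Finset.univ : Finset (Fin N)).card := by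
      simpa [Nat.card_eq_fintype_card] using hN
    obtain ⟨q, -, hq⟩ := Finset.exists_lt_card_fiber_of_mul_lt_card_of_maps_to
      (fun i _ => Finset.mem_univ (f i)) hcard
    set s : Finset (Fin N) := Finset.univ.filter (fun i => f i = q) with hs
    have hsne : s.Nonempty := Finset.card_pos.mp (by omega)
    obtain ⟨i0, hi0⟩ := hsne
    have hfi0 : f i0 = q := (Finset.mem_filter.mp hi0).2
    -- reindex by Fin s.card
    set g : Fin s.card → Fin N := fun j => (s.equivFin.symm j : Fin N) with hg
    have hginj : Function.Injective g := by
      intro j1 j2 h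
      have := Subtype.ext h
      exact s.equivFin.symm.injective this
    have hgmem : ∀ j, g j ∈ s := fun j => (s.equivFin.symm j).2
    -- decomposition
    have hdec : ∀ j : Fin s.card, ∃ c : kˣ, ∃ w : Kˣ,
        u (g j) = u i0 * Units.map (algebraMap k K).toMonoidHom c * w ^ d := by
      intro j
      have h1 : f (g j) = f i0 := by
        rw [hfi0]; exact (Finset.mem_filter.mp (hgmem j)).2
      have h2 : (u i0)⁻¹ * u (g j) ∈ mixedPowerSubgroup k K d := by
        rw [← QuotientGroup.eq]
        exact h1.symm
      rw [mixedPowerSubgroup, Subgroup.mem_sup] at h2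
      obtain ⟨y, hy, z, hz', hyz⟩ := h2
      obtain ⟨c, rfl⟩ := hy
      obtain ⟨w, rfl⟩ := hz'
      refine ⟨c, w, ?_⟩
      rw [powMonoidHom_apply] at hyz
      rw [mul_assoc, hyz, mul_inv_cancel_left]
    choose c w hcw using hdec
    -- solve over k
    obtain ⟨z, hzne, hzsum⟩ := hm s.card hq (fun j => (c j : k))
    -- build solution over K
    set x : Fin N → K :=
      Function.extend g (fun j => ((w j)⁻¹ : Kˣ) * algebraMap k K (z j)) 0 with hx
    have hxg : ∀ j, x (g j) = ((w j)⁻¹ : Kˣ) * algebraMap k K (z j) :=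
      fun j => hginj.extend_apply _ _ j
    refine ⟨x, ?_, ?_⟩
    · obtain ⟨j, hj⟩ := Function.ne_iff.mp hzne
      intro h
      have hxj : x (g j) = 0 := by rw [h]; rfl
      rw [hxg j] at hxj
      rcases mul_eq_zero.mp hxj with h' | h'
      · exact (w j)⁻¹.ne_zero h'
      · exact hj ((map_eq_zero _).mp h')
    · have hout : ∀ i ∈ Finset.univ, i ∉ s → a i * x i ^ d = 0 := by
        intro i _ hi
        have : ¬∃ j, g j = i := by
          rintro ⟨j, rfl⟩; exact hi (hgmem j)
        rw [hx, Function.extend_apply' _ _ _ this]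
        simp [hd0]
      rw [← Finset.sum_subset (Finset.subset_univ s) hout]
      rw [← Finset.sum_coe_sort s (fun i => a i * x i ^ d)]
      rw [← Equiv.sum_comp s.equivFin.symm (fun i : s => a (i : Fin N) * x (i : Fin N) ^ d)]
      have hterm : ∀ j : Fin s.card,
          a (g j) * x (g j) ^ d = (u i0 : K) * algebraMap k K ((c j : k) * z j ^ d) := by
        intro j
        have ha : a (g j) = ((u (g j) : Kˣ) : K) := rfl
        rw [ha, hcw j, hxg j]
        have hw : ((w j : Kˣ) : K) ≠ 0 := (w j).ne_zero
        push_cast [Units.coe_map]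
        field_simp
        simp only [RingHom.toMonoidHom_eq_coe, MonoidHom.coe_coe, div_pow]
        rw [mul_assoc, mul_div_cancel₀ _ (pow_ne_zero d hw)]
      calc ∑ j : Fin s.card, a (g j) * x (g j) ^ d
          = ∑ j : Fin s.card, (u i0 : K) * algebraMap k K ((c j : k) * z j ^ d) := by
            exact Finset.sum_congr rfl fun j _ => hterm j
        _ = (u i0 : K) * algebraMap k K (∑ j, (c j : k) * z j ^ d) := by
            rw [map_sum, Finset.mul_sum]
        _ = 0 := by rw [hzsum, map_zero, mul_zero]
  exact ⟨fun d hd => ⟨_, main d hd⟩, main⟩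
end

section
/- Let k be a Brauer field of characteristic p > 0. Then [k : k^p] ≤ N_k(p); in particular [k : k^{p^n}] is finite for every n ≥ 1, i.e., k is semi-perfect. -/
lemma rank_le_of_isBrauerBound (k : Type*) [Field k] (p n N : ℕ) [Fact p.Prime] [CharP k p]
    (hN : IsBrauerBound k (p ^ n) N) :
    Module.rank ((iterateFrobenius k p n).fieldRange) k ≤ (N : Cardinal) := by
  have hp : p ≠ 0 := (Fact.out : p.Prime).ne_zero
  apply rank_le
  intro s li
  by_contra hcard
  push_neg at hcard
  set m := s.card with hm
  let e : Fin m ≃ s := s.equivFin.symm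
  let a : Fin m → k := fun i => (e i : k)
  have li' : LinearIndependent ((iterateFrobenius k p n).fieldRange) a :=
    li.comp e e.injective
  obtain ⟨x, hx0, hsum⟩ := hN m hcard a
  have hc : ∀ i, x i ^ p ^ n ∈ (iterateFrobenius k p n).fieldRange := fun i =>
    ⟨x i, rfl⟩
  let c : Fin m → (iterateFrobenius k p n).fieldRange := fun i => ⟨x i ^ p ^ n, hc i⟩
  have hzero : ∀ i, c i = 0 := by
    have := linearIndependent_iff'.mp li' Finset.univ c ?_
    · intro i; exact this i (Finset.mem_univ i)
    · rw [← hsum]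
      refine Finset.sum_congr rfl fun i _ => ?_
      show (↑(c i) : k) * a i = a i * x i ^ p ^ n
      simp [c, mul_comm]
  apply hx0
  funext i
  have : x i ^ p ^ n = 0 := by
    have := hzero i
    simpa [c, Subtype.ext_iff] using this
  exact pow_eq_zero_iff (pow_ne_zero n hp) |>.mp this

/-- A Brauer field `k` of characteristic `p > 0` satisfies `[k : k^p] ≤ N_k(p)`; in
particular `[k : k^{p^n}]` is finite for every `n ≥ 1`, i.e. `k` is semi-perfect. -/
theorem brauerField_semiperfect (k : Type*) [Field k] (p : ℕ) [Fact p.Prime] [CharP k p]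
    (hk : IsBrauerField k) :
    Module.rank ((frobenius k p).fieldRange) k ≤ (brauerConst k p : Cardinal) ∧
      ∀ n : ℕ, 1 ≤ n → FiniteDimensional ((iterateFrobenius k p n).fieldRange) k := by
  have hp1 : 1 ≤ p := (Fact.out : p.Prime).one_lt.le
  constructor
  · have hmem : IsBrauerBound k p (brauerConst k p) := Nat.sInf_mem (hk p hp1)
    have hmem1 : IsBrauerBound k (p ^ 1) (brauerConst k p) := by rwa [pow_one]
    have := rank_le_of_isBrauerBound k p 1 (brauerConst k p) hmem1
    rwa [iterateFrobenius_one] at this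
  · intro n hn
    obtain ⟨N, hN⟩ := hk (p ^ n) (Nat.one_le_pow n p (Fact.out : p.Prime).pos)
    have := rank_le_of_isBrauerBound k p n N hN
    have : Module.Finite ((iterateFrobenius k p n).fieldRange) k :=
      Module.rank_lt_aleph0_iff.mp (this.trans_lt (Cardinal.nat_lt_aleph0 N))
    exact this
end

section
/- Let k be an infinite field and let d > 0 be an integer that is not a multiple of the characteristic of k. Then the diagonal form f = a_1 x_1^d + ... + a_n x_n^d in n variables, with all coefficients a_1, ..., a_n ∈ k nonzero, has strength at least n/2: if f = g_1 h_1 + ... + g_s h_s with all g_i, h_i homogeneous polynomials of degrees strictly between 0 and d, then 2s ≥ n. -/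
open MvPolynomial

lemma aux_card_degree (σ : Type*) [Fintype σ] [DecidableEq σ] (t : ℕ) :
    Nat.card {β : σ →₀ ℕ // β.degree = t} = (Fintype.card σ + t - 1).choose t := by
  have e : {β : σ →₀ ℕ // β.degree = t} ≃ Sym σ t := by
    refine (Multiset.toFinsupp.symm.toEquiv.subtypeEquiv fun β => ?_)
    show β.degree = t ↔ Multiset.card (Finsupp.toMultiset β) = t
    rw [Finsupp.card_toMultiset]
    simp [Finsupp.degree, Finsupp.sum]; exact Iff.rfl
  rw [Nat.card_congr e, Nat.card_eq_fintype_card, Sym.card_sym_eq_choose]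

lemma aux_degree_eq_sum {σ : Type*} [Fintype σ] (β : σ →₀ ℕ) : β.degree = ∑ i, β i := by
  rw [Finsupp.degree]
  exact Finset.sum_subset (Finset.subset_univ _) fun i _ h => Finsupp.notMem_support_iff.mp h

lemma aux_card_fun (σ : Type*) [Fintype σ] [DecidableEq σ] (t : ℕ) :
    Nat.card {δ : σ → ℕ // ∑ i, δ i = t} = (Fintype.card σ + t - 1).choose t := by
  rw [← aux_card_degree σ t]
  refine Nat.card_congr (Equiv.subtypeEquiv (p := fun δ : σ → ℕ => ∑ i, δ i = t)
    (q := fun β : σ →₀ ℕ => β.degree = t) Finsupp.equivFunOnFinite.symm fun δ => ?_)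
  simp only [aux_degree_eq_sum]
  exact Eq.congr_left (Finset.sum_congr rfl fun i _ => rfl).symm

lemma aux_li_card_le {K M ι : Type*} [Field K] [AddCommGroup M] [Module K M] {v : ι → M}
    (hv : LinearIndependent K v) {S : Set M} (hS : S.Finite)
    (hsub : ∀ i, v i ∈ Submodule.span K S) : Nat.card ι ≤ Nat.card S := by
  set W := Submodule.span K S
  have hw : LinearIndependent K (fun i => (⟨v i, hsub i⟩ : W)) := by
    apply LinearIndependent.of_comp W.subtype
    exact hv
  have h1 := hw.cardinal_lift_le_rank
  have h2 : Module.rank K W ≤ Cardinal.mk S := rank_span_le S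
  have hfin : Cardinal.mk S < Cardinal.aleph0 := hS.lt_aleph0
  have h3 : Cardinal.lift.{_} (Cardinal.mk ι) ≤ Cardinal.lift (Cardinal.mk S) :=
    h1.trans (Cardinal.lift_le.mpr h2)
  have h4 := Cardinal.toNat_le_toNat h3 (by simpa using hfin)
  simpa [Nat.card] using h4

lemma aux_hc_mul {σ K : Type*} [Field K] {q P : MvPolynomial σ K} {m t : ℕ}
    (hP : P.IsHomogeneous m) (hmt : m ≤ t) :
    homogeneousComponent t (q * P) = homogeneousComponent (t - m) q * P := by
  conv_lhs => rw [← sum_homogeneousComponent q]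
  rw [Finset.sum_mul, map_sum]
  have hterm : ∀ u, homogeneousComponent t (homogeneousComponent u q * P)
      = if t = u + m then homogeneousComponent u q * P else 0 := fun u =>
    homogeneousComponent_of_mem (((homogeneousComponent_isHomogeneous u q).mul hP))
  simp only [hterm]
  by_cases hin : t - m ≤ q.totalDegree
  · rw [Finset.sum_eq_single (t - m)]
    · rw [if_pos (by omega)]
    · intro x _ hx; rw [if_neg (by omega)]
    · intro habs; exact absurd (Finset.mem_range.mpr (by omega)) habs
  · rw [Finset.sum_eq_zero, homogeneousComponent_eq_zero (t - m) q (by omega), zero_mul]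
    intro x hx
    rw [Finset.mem_range] at hx
    rw [if_neg (by omega)]

lemma aux_fin_sum (σ : Type*) [Fintype σ] (t : ℕ) :
    Finite {δ : σ → ℕ // ∑ i, δ i = t} := by
  have h : Set.Finite {δ : σ → ℕ | ∑ i, δ i = t} := by
    refine Set.Finite.subset (Set.Finite.pi (fun _ : σ => Set.finite_Iic t)) ?_
    intro δ hδ
    simp only [Set.mem_pi, Set.mem_Iic, Set.mem_setOf_eq, Set.mem_univ, forall_true_left] at *
    intro i
    calc δ i ≤ ∑ j, δ j := Finset.single_le_sum (fun j _ => Nat.zero_le _) (Finset.mem_univ i)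
    _ = t := hδ
  exact h.to_subtype

lemma aux_endgame (T r t n : ℕ) (hr2 : 2 ≤ r) (hn : r + 1 ≤ n) (ht : t = (T + 1) * r)
    (hchain : (n + t - 1).choose t ≤ T * (r + t - 1).choose t) : False := by
  have hmono : (r + 1 + t - 1).choose t ≤ (n + t - 1).choose t :=
    Nat.choose_le_choose t (by omega)
  have hsymm1 : (r + t).choose r = (r + t).choose t := by
    have h := Nat.choose_symm (show r ≤ r + t by omega) (n := r + t)
    rw [show r + t - r = t by omega] at h
    exact h.symm
  have hsymm2 : (r + t - 1).choose (r - 1) = (r + t - 1).choose t := by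
    have h := Nat.choose_symm (show r - 1 ≤ r + t - 1 by omega) (n := r + t - 1)
    rw [show r + t - 1 - (r - 1) = t by omega] at h
    exact h.symm
  have hid := Nat.add_one_mul_choose_eq (r + t - 1) (r - 1)
  rw [show r + t - 1 + 1 = r + t from by omega, show r - 1 + 1 = r from by omega] at hid
  have hrt : r + t = (T + 2) * r := by rw [ht]; ring
  have hBpos : 0 < (r + t - 1).choose (r - 1) := Nat.choose_pos (by omega)
  have hA : (r + t).choose r * r = (T + 2) * ((r + t - 1).choose (r - 1)) * r := by
    rw [← hid, hrt]; ring
  have hA' : (r + t).choose r = (T + 2) * (r + t - 1).choose (r - 1) :=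
    Nat.eq_of_mul_eq_mul_right (by omega) hA
  have hfinal : (T + 2) * (r + t - 1).choose (r - 1) ≤ T * (r + t - 1).choose (r - 1) := by
    calc (T + 2) * (r + t - 1).choose (r - 1) = (r + t).choose r := hA'.symm
      _ = (r + t).choose t := hsymm1
      _ = (r + 1 + t - 1).choose t := by rw [show r + 1 + t - 1 = r + t from by omega]
      _ ≤ (n + t - 1).choose t := hmono
      _ ≤ T * (r + t - 1).choose t := hchain
      _ = T * (r + t - 1).choose (r - 1) := by rw [hsymm2]
  have hle := Nat.le_of_mul_le_mul_right hfinal hBpos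
  omega

/-- Over an infinite field `k`, if `d > 0` is not a multiple of the characteristic, then a
diagonal form `a_1 x_1^d + ⋯ + a_n x_n^d` with all `a_i ≠ 0` has strength at least `n/2`:
any expression of it as a sum of `s` products of pairs of homogeneous polynomials of
degrees strictly between `0` and `d` forces `2s ≥ n`. -/
theorem diagonal_strength (k : Type*) [Field k] [Infinite k] (d : ℕ) (hd : 0 < d)
    (hchar : ¬ (ringChar k ∣ d)) (n s : ℕ) (a : Fin n → k) (ha : ∀ i, a i ≠ 0)
    (g h : Fin s → MvPolynomial (Fin n) k) (dg dh : Fin s → ℕ)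
    (hg : ∀ i, 0 < dg i ∧ dg i < d ∧ (g i).IsHomogeneous (dg i))
    (hh : ∀ i, 0 < dh i ∧ dh i < d ∧ (h i).IsHomogeneous (dh i))
    (heq : (∑ i : Fin n, C (a i) * X i ^ d) = ∑ i : Fin s, g i * h i) :
    n ≤ 2 * s := by
  by_contra hlt
  push_neg at hlt
  have hn : 0 < n := by omega
  -- dispatch the case s = 0
  rcases Nat.eq_zero_or_pos s with hs | hs
  · subst hs
    have h0 : (∑ i : Fin n, C (a i) * X i ^ d : MvPolynomial (Fin n) k) = 0 := by
      rw [heq]; exact Finset.sum_of_isEmpty _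
    have hco := congrArg (coeff (Finsupp.single (⟨0, hn⟩ : Fin n) d)) h0
    rw [coeff_sum, coeff_zero] at hco
    have hval : ∀ i : Fin n, coeff (Finsupp.single (⟨0, hn⟩ : Fin n) d)
        (C (a i) * X i ^ d) = if i = ⟨0, hn⟩ then a i else 0 := by
      intro i
      rw [coeff_C_mul, X_pow_eq_monomial, coeff_monomial]
      split_ifs with h1 h2 h2
      · rw [mul_one]
      · exact absurd (Finsupp.single_left_injective hd.ne' h1) h2
      · exact absurd (by rw [h2]) h1
      · rw [mul_zero]
    rw [Finset.sum_congr rfl (fun i _ => hval i), Finset.sum_ite_eq' _ _ (fun i : Fin n => a i)]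
      at hco
    simp only [Finset.mem_univ, if_true] at hco
    exact ha _ hco
  -- now s ≥ 1, and hence d ≥ 2
  have hd2 : 2 ≤ d := by
    by_contra hcon
    have := hg ⟨0, hs⟩
    omega
  have hdk : (d : k) ≠ 0 := fun h0 =>
    hchar ((CharP.cast_eq_zero_iff k (ringChar k) d).mp h0)
  -- setup
  set ι := (Fin s ⊕ Fin s) with hι
  set p : ι → MvPolynomial (Fin n) k := Sum.elim g h with hpdef
  set e : ι → ℕ := Sum.elim dg dh with hedef
  have hp : ∀ i, (p i).IsHomogeneous (e i) := by
    rintro (i | i)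
    · exact (hg i).2.2
    · exact (hh i).2.2
  have he1 : ∀ i : ι, 0 < e i := by
    rintro (i | i) <;> simp only [hedef, Sum.elim_inl, Sum.elim_inr]
    · exact (hg i).1
    · exact (hh i).1
  have he2 : ∀ i : ι, e i ≤ d - 1 := by
    rintro (i | i) <;> simp only [hedef, Sum.elim_inl, Sum.elim_inr]
    · have := (hg i).2.1; omega
    · have := (hh i).2.1; omega
  -- Phase 1 : X j ^ (d-1) ∈ ideal generated by the p i
  have hXmem : ∀ j, (X j : MvPolynomial (Fin n) k) ^ (d - 1) ∈ Ideal.span (Set.range p) := by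
    intro j
    have hL : (pderiv j) (∑ i : Fin n, C (a i) * X i ^ d)
        = C ((d : k) * a j) * X j ^ (d - 1) := by
      rw [map_sum, Finset.sum_eq_single j]
      · rw [pderiv_C_mul, pderiv_pow, pderiv_X, Pi.single_eq_same, mul_one,
          (map_natCast C d).symm, ← mul_assoc, ← C_mul, mul_comm (a j)]
      · intro i _ hij
        rw [pderiv_C_mul, pderiv_pow, pderiv_X, Pi.single_eq_of_ne hij, mul_zero, mul_zero]
      · intro habs; exact absurd (Finset.mem_univ j) habs
    have hR : (pderiv j) (∑ i : Fin s, g i * h i) ∈ Ideal.span (Set.range p) := by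
      rw [map_sum]
      refine Ideal.sum_mem _ fun i _ => ?_
      rw [pderiv_mul]
      refine add_mem (Ideal.mul_mem_left _ _ ?_) (Ideal.mul_mem_right _ _ ?_)
      · exact Ideal.subset_span ⟨Sum.inr i, rfl⟩
      · exact Ideal.subset_span ⟨Sum.inl i, rfl⟩
    have hmem : C ((d : k) * a j) * X j ^ (d - 1) ∈ Ideal.span (Set.range p) := by
      rw [← hL, heq]; exact hR
    have hinv : (X j : MvPolynomial (Fin n) k) ^ (d - 1)
        = C (((d : k) * a j)⁻¹) * (C ((d : k) * a j) * X j ^ (d - 1)) := by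
      rw [← mul_assoc, ← C_mul, inv_mul_cancel₀ (mul_ne_zero hdk (ha j)), C_1, one_mul]
    rw [hinv]
    exact Ideal.mul_mem_left _ _ hmem
  -- degree helper
  have degadd : ∀ (u v : Fin n →₀ ℕ), (u + v).degree = u.degree + v.degree := by
    intro u v
    simp only [aux_degree_eq_sum, Finsupp.add_apply, Finset.sum_add_distrib]
  -- Phase 2 : spanning set
  set N := n * d with hN
  set G : Set (MvPolynomial (Fin n) k) :=
    {q | ∃ (α : ι → ℕ) (β : Fin n →₀ ℕ), β.degree < N ∧
      q = (∏ i, p i ^ α i) * monomial β 1} with hG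
  have hmulp : ∀ (i : ι) (q : MvPolynomial (Fin n) k), q ∈ Submodule.span k G →
      p i * q ∈ Submodule.span k G := by
    intro i q hq
    induction hq using Submodule.span_induction with
    | mem x hx =>
      obtain ⟨α, β, hβ, rfl⟩ := hx
      refine Submodule.subset_span ⟨Function.update α i (α i + 1), β, hβ, ?_⟩
      rw [← mul_assoc]
      congr 1
      rw [← Finset.mul_prod_erase Finset.univ
            (fun j => p j ^ (Function.update α i (α i + 1) j)) (Finset.mem_univ i),
          ← Finset.mul_prod_erase Finset.univ (fun j => p j ^ α j) (Finset.mem_univ i),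
          Function.update_self, pow_succ', ← mul_assoc]
      refine congrArg₂ _ rfl (Finset.prod_congr rfl fun j hj => ?_)
      rw [Function.update_of_ne (Finset.ne_of_mem_erase hj)]
    | zero => rw [mul_zero]; exact Submodule.zero_mem _
    | add x y _ _ hx hy => rw [mul_add]; exact Submodule.add_mem _ hx hy
    | smul c x _ hx => rw [Algebra.mul_smul_comm]; exact Submodule.smul_mem _ _ hx
  have key : ∀ (t : ℕ) (β : Fin n →₀ ℕ), β.degree ≤ t →
      (monomial β 1 : MvPolynomial (Fin n) k) ∈ Submodule.span k G := by
    intro t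
    induction t using Nat.strong_induction_on with
    | _ t IH =>
      intro β hβt
      by_cases hβ : β.degree < N
      · exact Submodule.subset_span ⟨0, β, hβ, by simp⟩
      · push_neg at hβ
        have hex : ∃ j, d - 1 ≤ β j := by
          by_contra hcon
          push_neg at hcon
          have hle : β.degree ≤ n * (d - 2) := by
            rw [aux_degree_eq_sum]
            calc ∑ i, β i ≤ ∑ _i : Fin n, (d - 2) :=
                  Finset.sum_le_sum fun i _ => by have := hcon i; omega
            _ = n * (d - 2) := by
                  rw [Finset.sum_const, Finset.card_univ, Fintype.card_fin, smul_eq_mul]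
          have hdd : n * d = n * (d - 2) + n * 2 := by
            rw [← Nat.mul_add]
            congr 1
            omega
          omega
        obtain ⟨j, hj⟩ := hex
        set β' := β - Finsupp.single j (d - 1) with hβ'
        have hsum : Finsupp.single j (d - 1) + β' = β := by
          ext i
          simp only [Finsupp.add_apply, Finsupp.tsub_apply, Finsupp.single_apply, hβ']
          split_ifs with hij
          · subst hij; omega
          · omega
        have hdegβ' : β'.degree + (d - 1) = β.degree := by
          rw [← hsum, degadd]
          have hsing : (Finsupp.single j (d - 1)).degree = d - 1 := by
            rw [aux_degree_eq_sum,
              Finset.sum_congr rfl (fun x (_ : x ∈ Finset.univ) => Finsupp.single_apply),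
              Finset.sum_ite_eq]
            rw [if_pos (Finset.mem_univ j)]
          omega
        obtain ⟨c, hc⟩ := Ideal.mem_span_range_iff_exists_fun.mp (hXmem j)
        set c' : ι → MvPolynomial (Fin n) k :=
          fun i => homogeneousComponent (d - 1 - e i) (c i) with hc'def
        have hXhom : ((X j : MvPolynomial (Fin n) k) ^ (d - 1)) ∈
            homogeneousSubmodule (Fin n) k (d - 1) :=
          (mem_homogeneousSubmodule _ _).mpr (isHomogeneous_X_pow j (d - 1))
        have hc2 : ∑ i, c' i * p i = (X j : MvPolynomial (Fin n) k) ^ (d - 1) := by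
          have hcomp := congrArg (homogeneousComponent (d - 1)) hc
          rw [map_sum] at hcomp
          calc ∑ i, c' i * p i
              = ∑ i, homogeneousComponent (d - 1) (c i * p i) :=
                Finset.sum_congr rfl fun i _ => (aux_hc_mul (hp i) (he2 i)).symm
            _ = homogeneousComponent (d - 1) ((X j : MvPolynomial (Fin n) k) ^ (d - 1)) := hcomp
            _ = X j ^ (d - 1) := by rw [homogeneousComponent_of_mem hXhom, if_pos rfl]
        have hmono : (monomial β 1 : MvPolynomial (Fin n) k)
            = ∑ i, p i * (c' i * monomial β' 1) := by
          have : (monomial β 1 : MvPolynomial (Fin n) k)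
              = (X j ^ (d - 1)) * monomial β' 1 := by
            rw [X_pow_eq_monomial, monomial_mul, one_mul, hsum]
          rw [this, ← hc2, Finset.sum_mul]
          exact Finset.sum_congr rfl fun i _ => by ring
        rw [hmono]
        refine Submodule.sum_mem _ fun i _ => hmulp i _ ?_
        have hdec : c' i * monomial β' 1
            = ∑ ν ∈ (c' i).support, coeff ν (c' i) • (monomial (ν + β') 1 :
                MvPolynomial (Fin n) k) := by
          conv_lhs => rw [← support_sum_monomial_coeff (c' i)]
          rw [Finset.sum_mul]
          refine Finset.sum_congr rfl fun ν _ => ?_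
          rw [monomial_mul, mul_one, smul_monomial, smul_eq_mul, mul_one]
        rw [hdec]
        refine Submodule.sum_mem _ fun ν hν => Submodule.smul_mem _ _ ?_
        have hνdeg : ν.degree = d - 1 - e i := by
          have hwt := homogeneousComponent_isHomogeneous (d - 1 - e i) (c i)
            (mem_support_iff.mp hν)
          rw [Finsupp.degree_eq_weight_one]; exact hwt
        have hlt' : (ν + β').degree ≤ t - 1 ∧ t - 1 < t := by
          rw [degadd]
          have h1 := he1 i
          have h2 := he2 i
          constructor <;> omega
        exact IH (t - 1) hlt'.2 _ hlt'.1
  -- Phase 3 : counting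
  set T := Nat.card {β : Fin n →₀ ℕ // β.degree < N} with hT
  set t := (T + 1) * (2 * s) with ht
  have hfinB : Finite {β : Fin n →₀ ℕ // β.degree < N} := by
    have := Finsupp.finite_of_degree_le (σ := Fin n) N
    refine (Set.Finite.subset this fun β hβ => ?_).to_subtype
    have hβ' : β.degree < N := hβ
    exact le_of_lt hβ'
  have hfinD : Finite {δ : ι → ℕ // ∑ i, δ i = t} := aux_fin_sum ι t
  set Idx := {ab : (ι → ℕ) × (Fin n →₀ ℕ) //
    ab.2.degree < N ∧ (∑ i, e i * ab.1 i) + ab.2.degree = t} with hIdx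
  set μ : Idx → MvPolynomial (Fin n) k :=
    fun ab => (∏ i, p i ^ ab.1.1 i) * monomial ab.1.2 1 with hμ
  set i₀ : ι := Sum.inl ⟨0, hs⟩ with hi₀
  set J : Idx → {β : Fin n →₀ ℕ // β.degree < N} × {δ : ι → ℕ // ∑ i, δ i = t} :=
    fun x => ⟨⟨x.1.2, x.2.1⟩,
      ⟨Function.update (fun i => e i * x.1.1 i) i₀ (e i₀ * x.1.1 i₀ + x.1.2.degree), by
        rw [Finset.sum_update_of_mem (Finset.mem_univ i₀)]
        have hxx := x.2.2
        rw [Finset.sum_eq_add_sum_sdiff_singleton_of_mem (Finset.mem_univ i₀)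
          (fun i => e i * x.1.1 i)] at hxx
        omega⟩⟩ with hJ
  have hJinj : Function.Injective J := by
    intro x y hxy
    have h1 : x.1.2 = y.1.2 := congrArg (fun z => z.1.1) hxy
    have h2 := congrArg (fun z => z.2.1) hxy
    simp only [hJ] at h2
    have h3 : ∀ i : ι, e i * x.1.1 i = e i * y.1.1 i := by
      intro i
      rcases eq_or_ne i i₀ with hii | hii
      · have h5 := congrFun h2 i₀
        rw [Function.update_self, Function.update_self, h1] at h5
        rw [hii]
        omega
      · have h5 := congrFun h2 i
        rwa [Function.update_of_ne hii, Function.update_of_ne hii] at h5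
    have h4 : x.1.1 = y.1.1 := funext fun i =>
      Nat.eq_of_mul_eq_mul_left (he1 i) (h3 i)
    exact Subtype.ext (Prod.ext h4 h1)
  have hfinIdx : Finite Idx := Finite.of_injective J hJinj
  have hfinμ : (Set.range μ).Finite := Set.finite_range μ
  -- every monomial of degree t is in the span of range μ
  have hspan : ∀ β : {β : Fin n →₀ ℕ // β.degree = t},
      (monomial (β : Fin n →₀ ℕ) 1 : MvPolynomial (Fin n) k)
        ∈ Submodule.span k (Set.range μ) := by
    rintro ⟨β, hβ⟩
    have h1 : (monomial β 1 : MvPolynomial (Fin n) k) ∈ Submodule.span k G :=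
      key β.degree β le_rfl
    have h2 := Submodule.apply_mem_span_image_of_mem_span (homogeneousComponent t) h1
    have h3 : homogeneousComponent t (monomial β 1 : MvPolynomial (Fin n) k)
        = monomial β 1 := by
      rw [homogeneousComponent_of_mem ((mem_homogeneousSubmodule _ _).mpr
        (isHomogeneous_monomial 1 hβ)), if_pos rfl]
    rw [h3] at h2
    have himg : (homogeneousComponent t) '' G ⊆ insert 0 (Set.range μ) := by
      rintro x ⟨q, ⟨α, β₀, hβ₀, rfl⟩, rfl⟩
      have hqhom : ((∏ i, p i ^ α i) * monomial β₀ 1 : MvPolynomial (Fin n) k).IsHomogeneous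
          ((∑ i, e i * α i) + β₀.degree) := by
        refine IsHomogeneous.mul ?_ (isHomogeneous_monomial 1 rfl)
        exact IsHomogeneous.prod _ _ _ fun i _ => (hp i).pow (α i)
      rw [homogeneousComponent_of_mem ((mem_homogeneousSubmodule _ _).mpr hqhom)]
      split_ifs with hw
      · exact Set.mem_insert_of_mem _ ⟨⟨(α, β₀), ⟨hβ₀, hw.symm⟩⟩, rfl⟩
      · exact Set.mem_insert _ _
    have h4 := Submodule.span_mono himg h2
    rwa [Submodule.span_insert_zero] at h4
  -- linear independence of degree-t monomials
  have hli : LinearIndependent k (fun β : {β : Fin n →₀ ℕ // β.degree = t} =>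
      (monomial (β : Fin n →₀ ℕ) 1 : MvPolynomial (Fin n) k)) := by
    have hb := (basisMonomials (Fin n) k).linearIndependent
    have hcomp := hb.comp (Subtype.val : {β : Fin n →₀ ℕ // β.degree = t} → (Fin n →₀ ℕ))
      Subtype.val_injective
    have : ⇑(basisMonomials (Fin n) k) ∘ (Subtype.val :
        {β : Fin n →₀ ℕ // β.degree = t} → (Fin n →₀ ℕ))
        = fun β : {β : Fin n →₀ ℕ // β.degree = t} =>
          (monomial (β : Fin n →₀ ℕ) 1 : MvPolynomial (Fin n) k) := by
      funext β
      simp [coe_basisMonomials]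
    rwa [this] at hcomp
  -- the cardinality chain
  have hcard1 : Nat.card {β : Fin n →₀ ℕ // β.degree = t} ≤ Nat.card (Set.range μ) :=
    aux_li_card_le hli hfinμ hspan
  have hcard2 : Nat.card (Set.range μ) ≤ Nat.card Idx :=
    Nat.card_le_card_of_surjective (Set.rangeFactorization μ) Set.rangeFactorization_surjective
  have hcard3 : Nat.card Idx ≤ T * Nat.card {δ : ι → ℕ // ∑ i, δ i = t} := by
    calc Nat.card Idx ≤ Nat.card ({β : Fin n →₀ ℕ // β.degree < N} ×
          {δ : ι → ℕ // ∑ i, δ i = t}) := Nat.card_le_card_of_injective J hJinj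
    _ = T * Nat.card {δ : ι → ℕ // ∑ i, δ i = t} := by rw [Nat.card_prod]
  -- explicit formulas
  have hcardι : Fintype.card ι = 2 * s := by
    simp [hι, Fintype.card_sum, Fintype.card_fin, two_mul]
  have hformD : Nat.card {δ : ι → ℕ // ∑ i, δ i = t} = (2 * s + t - 1).choose t := by
    rw [aux_card_fun, hcardι]
  have hformT : Nat.card {β : Fin n →₀ ℕ // β.degree = t} = (n + t - 1).choose t := by
    rw [aux_card_degree, Fintype.card_fin]
  exact aux_endgame T (2 * s) t n (Nat.le_mul_of_pos_right 2 hs) hlt ht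
    (by rw [← hformT, ← hformD]; exact hcard1.trans (hcard2.trans hcard3))
end

section
/- Let p be a prime, let k = F_p(t_1, t_2, ...) be the field of rational functions over F_p in countably many algebraically independent variables, and let n ≥ 1. Then the polynomial f = t_1 x_1^p + ... + t_n x_n^p ∈ k[x_1, ..., x_n] has strength at least n/2 over k: if f = g_1 h_1 + ... + g_s h_s with all g_i, h_i ∈ k[x_1, ..., x_n] homogeneous of degrees strictly between 0 and p, then 2s ≥ n. -/
open MvPolynomial



section FracDeriv

variable {R : Type*} [CommRing R] [IsDomain R]

noncomputable def fracDeriv (D : R →+ R) (x : FractionRing R) : FractionRing R :=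
  let s := IsLocalization.sec (nonZeroDivisors R) x
  (algebraMap R _ (D s.1) * algebraMap R _ (s.2 : R) -
    algebraMap R _ s.1 * algebraMap R _ (D (s.2 : R))) / (algebraMap R _ (s.2 : R)) ^ 2

theorem fracDeriv_spec (D : R →+ R) (hD : ∀ a b, D (a * b) = a * D b + b * D a)
    (a b : R) (hb : b ≠ 0) :
    fracDeriv D (algebraMap R (FractionRing R) a / algebraMap R _ b) =
      (algebraMap R _ (D a) * algebraMap R _ b - algebraMap R _ a * algebraMap R _ (D b)) /
        (algebraMap R (FractionRing R) b) ^ 2 := by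
  classical
  set K := FractionRing R
  have hinj : Function.Injective (algebraMap R K) := IsFractionRing.injective R K
  set x : K := algebraMap R K a / algebraMap R K b with hx
  set s := IsLocalization.sec (nonZeroDivisors R) x with hs
  have hb2 : (s.2 : R) ≠ 0 := nonZeroDivisors.coe_ne_zero s.2
  have hbK : algebraMap R K b ≠ 0 := fun hh => hb (hinj (by simpa using hh))
  have hb2K : algebraMap R K (s.2 : R) ≠ 0 := fun hh => hb2 (hinj (by simpa using hh))
  have hsec : x * algebraMap R K (s.2 : R) = algebraMap R K s.1 :=
    IsLocalization.sec_spec (nonZeroDivisors R) x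
  have hcross : a * (s.2 : R) = s.1 * b := by
    apply hinj
    have : algebraMap R K a * algebraMap R K (s.2 : R)
        = algebraMap R K s.1 * algebraMap R K b := by
      rw [hx, div_mul_eq_mul_div, div_eq_iff hbK] at hsec
      linear_combination hsec
    rw [map_mul, map_mul]; exact this
  have hder : D a * (s.2 : R) + a * D (s.2 : R) = D s.1 * b + s.1 * D b := by
    have h2 := congrArg D hcross
    rw [hD, hD] at h2
    linear_combination h2
  -- now the goal
  show (algebraMap R K (D s.1) * algebraMap R K (s.2:R) -
      algebraMap R K s.1 * algebraMap R K (D (s.2:R))) / (algebraMap R K (s.2:R)) ^ 2 = _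
  rw [div_eq_div_iff (pow_ne_zero 2 hb2K) (pow_ne_zero 2 hbK)]
  have key : (D s.1 * (s.2:R) - s.1 * D (s.2:R)) * b ^ 2
      = (D a * b - a * D b) * (s.2:R) ^ 2 := by
    linear_combination (-(b * (s.2:R))) * hder + (D (s.2:R) * b + D b * (s.2:R)) * hcross
  calc (algebraMap R K (D s.1) * algebraMap R K (s.2:R) -
      algebraMap R K s.1 * algebraMap R K (D (s.2:R))) * (algebraMap R K b) ^ 2
      = algebraMap R K ((D s.1 * (s.2:R) - s.1 * D (s.2:R)) * b ^ 2) := by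
        push_cast [map_mul, map_sub, map_pow]; ring
    _ = algebraMap R K ((D a * b - a * D b) * (s.2:R) ^ 2) := by rw [key]
    _ = _ := by push_cast [map_mul, map_sub, map_pow]; ring

theorem fracDeriv_algebraMap (D : R →+ R) (hD : ∀ a b, D (a * b) = a * D b + b * D a) (a : R) :
    fracDeriv D (algebraMap R (FractionRing R) a) = algebraMap R _ (D a) := by
  have h1 : (1 : R) ≠ 0 := one_ne_zero
  have := fracDeriv_spec D hD a 1 h1
  have hD1 : D 1 = 0 := by
    have := hD 1 1
    simpa using this
  simpa [hD1] using this

theorem fracDeriv_zero (D : R →+ R) (hD : ∀ a b, D (a * b) = a * D b + b * D a) : fracDeriv D (0 : FractionRing R) = 0 := by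
  simpa using fracDeriv_algebraMap D hD 0

theorem fracDeriv_add (D : R →+ R) (hD : ∀ a b, D (a * b) = a * D b + b * D a) (x y : FractionRing R) :
    fracDeriv D (x + y) = fracDeriv D x + fracDeriv D y := by
  have hinj : Function.Injective (algebraMap R (FractionRing R)) := IsFractionRing.injective R (FractionRing R)
  obtain ⟨a, b, hb, hxx⟩ := IsFractionRing.div_surjective (A := R) x
  obtain ⟨c, e, he, hyy⟩ := IsFractionRing.div_surjective (A := R) y
  rw [← hxx, ← hyy]
  have hb' : (b : R) ≠ 0 := nonZeroDivisors.coe_ne_zero ⟨b, hb⟩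
  have he' : (e : R) ≠ 0 := nonZeroDivisors.coe_ne_zero ⟨e, he⟩
  have hbK : algebraMap R (FractionRing R) b ≠ 0 := fun hh => hb' (hinj (by simpa using hh))
  have heK : algebraMap R (FractionRing R) e ≠ 0 := fun hh => he' (hinj (by simpa using hh))
  have hsum : algebraMap R (FractionRing R) a / algebraMap R (FractionRing R) b + algebraMap R (FractionRing R) c / algebraMap R (FractionRing R) e
      = algebraMap R (FractionRing R) (a * e + c * b) / algebraMap R (FractionRing R) (b * e) := by
    simp only [map_add, map_mul]; field_simp
    try ring
  rw [hsum, fracDeriv_spec D hD _ _ (mul_ne_zero hb' he'), fracDeriv_spec D hD a b hb',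
    fracDeriv_spec D hD c e he']
  rw [map_add, hD a e, hD c b, hD b e]
  push_cast [map_mul, map_add]
  field_simp
  ring

theorem fracDeriv_mul (D : R →+ R) (hD : ∀ a b, D (a * b) = a * D b + b * D a) (x y : FractionRing R) :
    fracDeriv D (x * y) = fracDeriv D x * y + x * fracDeriv D y := by
  have hinj : Function.Injective (algebraMap R (FractionRing R)) := IsFractionRing.injective R (FractionRing R)
  obtain ⟨a, b, hb, hxx⟩ := IsFractionRing.div_surjective (A := R) x
  obtain ⟨c, e, he, hyy⟩ := IsFractionRing.div_surjective (A := R) y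
  rw [← hxx, ← hyy]
  have hb' : (b : R) ≠ 0 := nonZeroDivisors.coe_ne_zero ⟨b, hb⟩
  have he' : (e : R) ≠ 0 := nonZeroDivisors.coe_ne_zero ⟨e, he⟩
  have hbK : algebraMap R (FractionRing R) b ≠ 0 := fun hh => hb' (hinj (by simpa using hh))
  have heK : algebraMap R (FractionRing R) e ≠ 0 := fun hh => he' (hinj (by simpa using hh))
  have hmul : algebraMap R (FractionRing R) a / algebraMap R (FractionRing R) b * (algebraMap R (FractionRing R) c / algebraMap R (FractionRing R) e)
      = algebraMap R (FractionRing R) (a * c) / algebraMap R (FractionRing R) (b * e) := by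
    simp only [map_mul]; field_simp
  rw [hmul, fracDeriv_spec D hD _ _ (mul_ne_zero hb' he'), fracDeriv_spec D hD a b hb',
    fracDeriv_spec D hD c e he']
  rw [hD a c, hD b e]
  push_cast [map_mul, map_add]
  field_simp
  ring

end FracDeriv


section CoeffDeriv
variable {K : Type*} [CommSemiring K] {σ : Type*}

noncomputable def coeffDeriv (d : K →+ K) :
    MvPolynomial σ K →+ MvPolynomial σ K :=
  { toFun := AddMonoidAlgebra.map d, map_zero' := AddMonoidAlgebra.map_zero d,
    map_add' := AddMonoidAlgebra.map_add d }

theorem coeffDeriv_monomial (d : K →+ K) (δ : σ →₀ ℕ) (c : K) :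
    coeffDeriv d (monomial δ c) = monomial δ (d c) := by
  classical
  rw [← single_eq_monomial, ← single_eq_monomial]
  exact AddMonoidAlgebra.map_single d c δ

theorem coeffDeriv_mul (d : K →+ K) (hd : ∀ a b, d (a * b) = a * d b + b * d a)
    (f g : MvPolynomial σ K) :
    coeffDeriv d (f * g) = coeffDeriv d f * g + f * coeffDeriv d g := by
  classical
  induction f using MvPolynomial.induction_on' with
  | add f₁ f₂ ih1 ih2 =>
    rw [add_mul, map_add, ih1, ih2, map_add]
    ring
  | monomial α a =>
    induction g using MvPolynomial.induction_on' with
    | add g₁ g₂ ih1 ih2 =>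
      rw [mul_add, map_add, ih1, ih2, map_add]
      ring
    | monomial β b =>
      rw [monomial_mul, coeffDeriv_monomial, coeffDeriv_monomial, coeffDeriv_monomial,
        monomial_mul, monomial_mul, hd, ← map_add]
      congr 1
      ring
end CoeffDeriv


section Count
variable {K : Type*} [Field K]

theorem Finsupp.degree_add' {σ : Type*} (a b : σ →₀ ℕ) :
    (a + b).degree = a.degree + b.degree := by
  simp only [Finsupp.degree_eq_weight_one]
  exact map_add _ a b

theorem Finsupp.degree_single' {σ : Type*} (j : σ) (k : ℕ) :
    (Finsupp.single j k).degree = k := by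
  classical
  rcases eq_or_ne k 0 with rfl | hk
  · simp [Finsupp.degree]
  · exact Finsupp.degree_single j k

theorem homogeneousComponent_mul_homogeneous {σ : Type*} (u F : MvPolynomial σ K) {d m : ℕ}
    (hF : F.IsHomogeneous d) (hdm : d ≤ m) :
    homogeneousComponent m (u * F) = homogeneousComponent (m - d) u * F := by
  classical
  conv_lhs => rw [← sum_homogeneousComponent u, Finset.sum_mul, map_sum]
  have hterm : ∀ c : ℕ, homogeneousComponent m (homogeneousComponent c u * F)
      = if c = m - d then homogeneousComponent c u * F else 0 := by
    intro c
    have hh : (homogeneousComponent c u * F).IsHomogeneous (c + d) :=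
      (homogeneousComponent_isHomogeneous c u).mul hF
    rw [homogeneousComponent_of_mem ((mem_homogeneousSubmodule _ _).2 hh)]
    by_cases hc : m = c + d
    · have h2 : c = m - d := by omega
      rw [if_pos hc, if_pos h2]
    · have h2 : ¬(c = m - d) := fun hcc => hc (by omega)
      rw [if_neg hc, if_neg h2]
  rw [Finset.sum_congr rfl fun c _ => hterm c, Finset.sum_ite_eq' _ (m - d)]
  split
  · rfl
  · next hmem =>
    have : u.totalDegree < m - d := by
      simp only [Finset.mem_range, not_lt] at hmem
      omega
    rw [homogeneousComponent_eq_zero _ u this, zero_mul]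

theorem card_ge_of_mem_span {n p : ℕ} (hp : 0 < p) {ι : Type*} [Fintype ι]
    (F : ι → MvPolynomial (Fin n) K) (dF : ι → ℕ)
    (hd0 : ∀ i, 0 < dF i) (hdp : ∀ i, dF i ≤ p)
    (hF : ∀ i, (F i).IsHomogeneous (dF i))
    (hX : ∀ j : Fin n, (X j : MvPolynomial (Fin n) K) ^ p ∈ Ideal.span (Set.range F)) :
    n ≤ Fintype.card ι := by
  classical
  by_contra hcon
  push_neg at hcon
  set r := Fintype.card ι with hr
  -- the spanning submodules
  set gen : ℕ → Set (MvPolynomial (Fin n) K) := fun m =>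
    {x | ∃ α : Fin n →₀ ℕ, ∃ γ : ι →₀ ℕ, (∀ j, α j < p) ∧ (γ.sum fun _ e => e) ≤ m ∧
      x = monomial α 1 * ∏ i, F i ^ γ i} with hgen
  set M : ℕ → Submodule K (MvPolynomial (Fin n) K) := fun m => Submodule.span K (gen m) with hM
  have Mmono : ∀ {a b : ℕ}, a ≤ b → M a ≤ M b := by
    intro a b hab
    apply Submodule.span_mono
    rintro x ⟨α, γ, h1, h2, h3⟩
    exact ⟨α, γ, h1, h2.trans hab, h3⟩
  have MmulF : ∀ (m : ℕ) (i₀ : ι) (f : MvPolynomial (Fin n) K),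
      f ∈ M m → f * F i₀ ∈ M (m + 1) := by
    intro m i₀ f hf
    have : M m ≤ Submodule.comap (LinearMap.mulRight K (F i₀)) (M (m + 1)) := by
      rw [hM, Submodule.span_le]
      rintro x ⟨α, γ, h1, h2, rfl⟩
      simp only [Submodule.mem_comap, LinearMap.mulRight_apply]
      apply Submodule.subset_span
      set γ' : ι →₀ ℕ := γ + Finsupp.single i₀ 1 with hγ'
      have hprod : ∏ i, F i ^ γ' i = (∏ i, F i ^ γ i) * F i₀ := by
        have h1' : ∀ i, F i ^ γ' i
            = F i ^ γ i * F i ^ (Finsupp.single i₀ 1 i) := by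
          intro i
          rw [hγ', Finsupp.add_apply, pow_add]
        rw [Finset.prod_congr rfl (fun i _ => h1' i), Finset.prod_mul_distrib]
        congr 1
        rw [Finset.prod_eq_single i₀ (fun i _ hne => by
          rw [Finsupp.single_eq_of_ne' (Ne.symm hne), pow_zero]) (by simp)]
        simp
      refine ⟨α, γ', h1, ?_, ?_⟩
      · rw [hγ', Finsupp.sum_add_index (by simp) (by simp)]
        rw [Finsupp.sum_single_index (by simp)]
        omega
      · simp only [LinearMap.mulRight_apply, hprod, mul_assoc]
    exact this hf
  -- main claim
  have key : ∀ t : ℕ, ∀ δ : Fin n →₀ ℕ, δ.degree = t →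
      (monomial δ 1 : MvPolynomial (Fin n) K) ∈ M t := by
    intro t
    induction t using Nat.strong_induction_on with
    | _ t ih =>
      intro δ hδ
      by_cases hsmall : ∀ j, δ j < p
      · apply Submodule.subset_span
        refine ⟨δ, 0, hsmall, by simp, by simp⟩
      · push_neg at hsmall
        obtain ⟨j, hj⟩ := hsmall
        have hpt : p ≤ t := le_trans hj (hδ ▸ Finsupp.le_degree j δ)
        set δ' := δ - Finsupp.single j p with hδ'
        have hsub : Finsupp.single j p ≤ δ := by
          rw [Finsupp.single_le_iff]
          exact hj
        have hδeq : δ' + Finsupp.single j p = δ := tsub_add_cancel_of_le hsub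
        have hδ'deg : δ'.degree = t - p := by
          have := Finsupp.degree_add' δ' (Finsupp.single j p)
          rw [hδeq, hδ, Finsupp.degree_single'] at this
          omega
        -- get coefficients
        obtain ⟨c, hc⟩ := Ideal.mem_span_range_iff_exists_fun.1 (hX j)
        set w : ι → MvPolynomial (Fin n) K := fun i =>
          homogeneousComponent (p - dF i) (c i) with hw
        have hwsum : ∑ i, w i * F i = X j ^ p := by
          have h1 := congrArg (homogeneousComponent p) hc
          rw [map_sum] at h1
          have h2 : ∀ i : ι, homogeneousComponent p (c i * F i) = w i * F i := fun i =>
            homogeneousComponent_mul_homogeneous (c i) (F i) (hF i) (hdp i)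
          rw [Finset.sum_congr rfl fun i _ => h2 i] at h1
          rw [h1]
          have hXhom : ((X j : MvPolynomial (Fin n) K) ^ p).IsHomogeneous p := by
            rw [X_pow_eq_monomial]
            exact isHomogeneous_monomial _ (Finsupp.degree_single' j p)
          rw [homogeneousComponent_of_mem ((mem_homogeneousSubmodule _ _).2 hXhom)]
          simp
        have hmono_eq : (monomial δ 1 : MvPolynomial (Fin n) K)
            = ∑ i, (monomial δ' 1 * w i) * F i := by
          have : (monomial δ 1 : MvPolynomial (Fin n) K) = monomial δ' 1 * X j ^ p := by
            rw [X_pow_eq_monomial, monomial_mul, hδeq, one_mul]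
          rw [this, ← hwsum, Finset.mul_sum]
          exact Finset.sum_congr rfl fun i _ => by ring
        rw [hmono_eq]
        apply Submodule.sum_mem
        intro i _
        have hvhom : (monomial δ' 1 * w i).IsHomogeneous ((t - p) + (p - dF i)) :=
          (isHomogeneous_monomial _ hδ'deg).mul (homogeneousComponent_isHomogeneous _ _)
        have hdeg_eq : (t - p) + (p - dF i) = t - dF i := by
          have := hdp i
          omega
        have hvmem : monomial δ' 1 * w i ∈ M (t - dF i) := by
          rw [as_sum (monomial δ' 1 * w i)]
          apply Submodule.sum_mem
          intro δ'' hδ''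
          have hcoeff : coeff δ'' (monomial δ' 1 * w i) ≠ 0 := mem_support_iff.1 hδ''
          have hdeg'' : δ''.degree = t - dF i := by
            by_contra hne
            exact hcoeff (hvhom.coeff_eq_zero (by rw [hdeg_eq]; exact hne))
          have : (monomial δ'' (coeff δ'' (monomial δ' 1 * w i)) : MvPolynomial (Fin n) K)
              = coeff δ'' (monomial δ' 1 * w i) • monomial δ'' 1 := by
            rw [smul_monomial, smul_eq_mul, mul_one]
          rw [this]
          apply Submodule.smul_mem
          exact ih (t - dF i) (by have := hd0 i; omega) δ'' hdeg''
        have := MmulF (t - dF i) i _ hvmem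
        exact Mmono (by have := hd0 i; have := hdp i; omega) this
  -- counting
  set B : ℕ := p ^ n * n ^ (n - 1) + 1 with hB
  set m : ℕ := n * (B - 1) with hm
  set T : Finset (MvPolynomial (Fin n) K) := Finset.image
    (fun q : (Fin n → Fin p) × (ι → Fin (m + 1)) =>
      monomial (Finsupp.equivFunOnFinite.symm fun j => ((q.1 j : ℕ))) 1 *
        ∏ i, F i ^ ((q.2 i : ℕ))) Finset.univ with hT
  have hgenT : gen m ⊆ ↑T := by
    rintro x ⟨α, γ, h1, h2, rfl⟩
    have hγ : ∀ i, γ i < m + 1 := by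
      intro i
      have : γ i ≤ γ.sum fun _ e => e := by
        by_cases hi : i ∈ γ.support
        · exact Finset.single_le_sum (fun _ _ => Nat.zero_le _) hi
        · simp [Finsupp.notMem_support_iff.1 hi]
      omega
    simp only [hT, Finset.coe_image, Set.mem_image, Finset.mem_coe, Finset.mem_univ,
      Finset.coe_univ, Set.mem_univ, true_and]
    refine ⟨⟨fun j => ⟨α j, h1 j⟩, fun i => ⟨γ i, hγ i⟩⟩, ?_⟩
    have hα : (Finsupp.equivFunOnFinite.symm fun j => (((⟨α j, h1 j⟩ : Fin p)) : ℕ)) = α := by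
      apply Finsupp.ext
      intro j
      simp [Finsupp.equivFunOnFinite]
    simp only [hα]
  have hMT : M m ≤ Submodule.span K (T : Set (MvPolynomial (Fin n) K)) :=
    Submodule.span_le.2 (hgenT.trans Submodule.subset_span)
  -- independent family
  have hB1 : 1 ≤ B := by omega
  set ind : (Fin n → Fin B) → MvPolynomial (Fin n) K := fun β =>
    monomial (Finsupp.equivFunOnFinite.symm fun j => ((β j : ℕ))) 1 with hind
  have hindmem : ∀ β, ind β ∈ Submodule.span K (T : Set (MvPolynomial (Fin n) K)) := by
    intro β
    apply hMT
    have hdeg : (Finsupp.equivFunOnFinite.symm fun j => ((β j : ℕ)) : Fin n →₀ ℕ).degree ≤ m := by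
      rw [Finsupp.degree]
      calc ∑ j ∈ (Finsupp.equivFunOnFinite.symm fun j => ((β j : ℕ)) : Fin n →₀ ℕ).support,
            (Finsupp.equivFunOnFinite.symm fun j => ((β j : ℕ)) : Fin n →₀ ℕ) j
          ≤ ∑ j : Fin n, (Finsupp.equivFunOnFinite.symm fun j => ((β j : ℕ)) : Fin n →₀ ℕ) j :=
            Finset.sum_le_sum_of_subset (Finset.subset_univ _)
        _ ≤ ∑ _j : Fin n, (B - 1) := Finset.sum_le_sum fun j _ => by
            have : (β j : ℕ) < B := (β j).2
            simp [Finsupp.equivFunOnFinite]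
            omega
        _ = n * (B - 1) := by simp [Finset.sum_const, mul_comm]
    exact Mmono hdeg (key _ _ rfl)
  have hindep : LinearIndependent K ind := by
    have hinj : Function.Injective
        (fun β : Fin n → Fin B => (Finsupp.equivFunOnFinite.symm fun j => ((β j : ℕ)) : Fin n →₀ ℕ)) := by
      intro β₁ β₂ hβ
      funext j
      have := congrArg (fun f : Fin n →₀ ℕ => f j) hβ
      simp only [Finsupp.equivFunOnFinite] at this
      exact Fin.val_injective this
    have := (basisMonomials (Fin n) K).linearIndependent.comp _ hinj
    rw [hind]
    rw [coe_basisMonomials] at this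
    exact this
  -- conclude
  set W := Submodule.span K (T : Set (MvPolynomial (Fin n) K)) with hW
  haveI : Module.Finite K W := Module.Finite.span_of_finite K (T.finite_toSet)
  have hind' : LinearIndependent K (fun β => (⟨ind β, hindmem β⟩ : W)) := by
    apply LinearIndependent.of_comp W.subtype
    exact hindep
  have hcard1 : Fintype.card (Fin n → Fin B) ≤ Module.finrank K W :=
    hind'.fintype_card_le_finrank
  have hcard2 : Module.finrank K W ≤ T.card := by
    have := finrank_span_finset_le_card (R := K) T
    exact this
  have hcard3 : T.card ≤ p ^ n * (m + 1) ^ r := by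
    calc T.card ≤ Fintype.card ((Fin n → Fin p) × (ι → Fin (m + 1))) :=
          (Finset.card_image_le).trans (by simp)
      _ = p ^ n * (m + 1) ^ r := by
          simp [Fintype.card_prod, Fintype.card_fun, hr]
  have hcardfun : Fintype.card (Fin n → Fin B) = B ^ n := by
    simp
  have hfinal : B ^ n ≤ p ^ n * (m + 1) ^ r := by
    rw [← hcardfun]
    exact hcard1.trans (hcard2.trans hcard3)
  -- arithmetic contradiction
  have hn1 : 1 ≤ n := by omega
  have hstep1 : m + 1 ≤ n * B := by
    have h2 : B - 1 + 1 = B := by omega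
    calc m + 1 ≤ n * (B - 1) + n := by omega
      _ = n * (B - 1 + 1) := by rw [Nat.mul_add, Nat.mul_one]
      _ = n * B := by rw [h2]
  have hstep2 : p ^ n * (m + 1) ^ r ≤ p ^ n * (n * B) ^ (n - 1) := by
    apply Nat.mul_le_mul_left
    calc (m + 1) ^ r ≤ (n * B) ^ r := Nat.pow_le_pow_left hstep1 r
      _ ≤ (n * B) ^ (n - 1) := Nat.pow_le_pow_right (by positivity) (by omega)
  have hB1' : B - 1 = p ^ n * n ^ (n - 1) := by omega
  have hstep3 : p ^ n * (n * B) ^ (n - 1) = (B - 1) * B ^ (n - 1) := by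
    rw [mul_pow, ← mul_assoc, ← hB1']
  have hstep4 : (B - 1) * B ^ (n - 1) < B * B ^ (n - 1) := by
    have hBpos : 0 < B ^ (n - 1) := by positivity
    exact mul_lt_mul_of_pos_right (by omega) hBpos
  have hstep5 : B * B ^ (n - 1) = B ^ n := by
    rw [← pow_succ']
    congr 1
    omega
  omega

end Count

/-- Let `p` be a prime and `k = F_p(t_1, t_2, …)` the field of rational functions over
`F_p` in countably many variables. Then `f = t_1 x_1^p + ⋯ + t_n x_n^p` has strength at
least `n/2` over `k` : any expression of `f` as a sum of `s` products of pairs of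
homogeneous polynomials of degrees strictly between `0` and `p` forces `2s ≥ n`. -/
theorem diagonal_frobenius_strength (p : ℕ) [Fact p.Prime] (n : ℕ) (hn : 1 ≤ n) (s : ℕ)
    (g h : Fin s → MvPolynomial (Fin n) (FractionRing (MvPolynomial ℕ (ZMod p))))
    (dg dh : Fin s → ℕ)
    (hg : ∀ i, 0 < dg i ∧ dg i < p ∧ (g i).IsHomogeneous (dg i))
    (hh : ∀ i, 0 < dh i ∧ dh i < p ∧ (h i).IsHomogeneous (dh i))
    (heq : (∑ i : Fin n,
        C (algebraMap (MvPolynomial ℕ (ZMod p)) (FractionRing (MvPolynomial ℕ (ZMod p)))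
            (X (i : ℕ))) * X i ^ p)
      = ∑ i : Fin s, g i * h i) :
    n ≤ 2 * s := by
  classical
  set R : Type := MvPolynomial ℕ (ZMod p) with hR
  set K : Type := FractionRing R with hK
  set F : Fin s ⊕ Fin s → MvPolynomial (Fin n) K := Sum.elim g h with hF
  have hp : 0 < p := (Fact.out : p.Prime).pos
  -- the key span membership via differentiation
  have hX : ∀ j : Fin n, (X j : MvPolynomial (Fin n) K) ^ p ∈ Ideal.span (Set.range F) := by
    intro j
    set D : R →+ R := ((pderiv (j : ℕ)).toLinearMap.toAddMonoidHom : R →+ R) with hD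
    have hDmul : ∀ a b : R, D (a * b) = a * D b + b * D a := by
      intro a b
      simp [hD, Derivation.leibniz, smul_eq_mul]
    set dk : K →+ K := AddMonoidHom.mk' (fracDeriv D) (fracDeriv_add D hDmul) with hdk
    have hdkmul : ∀ a b : K, dk (a * b) = a * dk b + b * dk a := by
      intro a b
      simp only [hdk, AddMonoidHom.mk'_apply, fracDeriv_mul D hDmul]
      ring
    have happly := congrArg (coeffDeriv dk) heq
    -- LHS computation
    have hL : coeffDeriv dk (∑ i : Fin n,
        C (algebraMap R K (X (i : ℕ))) * X i ^ p)
        = (X j : MvPolynomial (Fin n) K) ^ p := by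
      rw [map_sum]
      have hterm : ∀ i : Fin n,
          coeffDeriv dk (C (algebraMap R K (X (i : ℕ))) * X i ^ p)
          = monomial (Finsupp.single i p)
              (algebraMap R K (pderiv (j : ℕ) (X (i : ℕ)))) := by
        intro i
        rw [X_pow_eq_monomial, C_mul_monomial, mul_one, coeffDeriv_monomial]
        congr 1
        exact fracDeriv_algebraMap D hDmul _
      rw [Finset.sum_congr rfl fun i _ => hterm i]
      rw [Finset.sum_eq_single j]
      · rw [pderiv_X_self, map_one, ← X_pow_eq_monomial]
      · intro i _ hij
        rw [pderiv_X_of_ne, map_zero, monomial_zero]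
        exact fun hc => hij (Fin.val_injective hc)
      · intro habs
        exact absurd (Finset.mem_univ j) habs
    -- RHS membership
    rw [hL] at happly
    rw [happly, map_sum]
    apply Ideal.sum_mem
    intro i _
    rw [coeffDeriv_mul dk hdkmul]
    apply Ideal.add_mem
    · exact Ideal.mul_mem_left _ _ (Ideal.subset_span ⟨Sum.inr i, rfl⟩)
    · exact Ideal.mul_mem_right _ _ (Ideal.subset_span ⟨Sum.inl i, rfl⟩)
  have := card_ge_of_mem_span hp F (Sum.elim dg dh)
    (fun i => by cases i with
      | inl i => exact (hg i).1
      | inr i => exact (hh i).1)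
    (fun i => by cases i with
      | inl i => exact le_of_lt (hg i).2.1
      | inr i => exact le_of_lt (hh i).2.1)
    (fun i => by cases i with
      | inl i => exact (hg i).2.2
      | inr i => exact (hh i).2.2)
    hX
  simpa [Fintype.card_sum, two_mul] using this
end

section
/- Let k be an infinite field, let d = (d_1, ..., d_r) be a multi-degree, and let Φ be any function from the set of multi-degrees to the natural numbers. Then there exists s ∈ ℕ, depending only on d, Φ, and k, with the following property: for every finite-dimensional k-vector space V and every tuple f = (f_1, ..., f_r) of homogeneous polynomial functions on V of degrees d_1, ..., d_r, there exist a multi-degree e ≤ d (in the lexicographic order) of length at most s and a tuple g of homogeneous polynomial functions on V of degrees given by e such that str(g) > Φ(e) and each f_i belongs to the k-subalgebra generated by the entries of g. -/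
open MvPolynomial

/-- A *multi-degree* : a tuple `d_1 ≥ d_2 ≥ ⋯ ≥ d_r ≥ 1` of integers. -/
structure MultiDegree where
  len : ℕ
  d : Fin len → ℕ
  anti : Antitone d
  pos : ∀ i, 1 ≤ d i

/-- A multi-degree as an eventually-zero function `ℕ → ℕ` (padding by zeros). -/
def MultiDegree.toFun (e : MultiDegree) : ℕ → ℕ :=
  fun i => if h : i < e.len then e.d ⟨i, h⟩ else 0

/-- Lexicographic comparison of multi-degrees (of possibly different lengths). -/
def MultiDegree.le (e f : MultiDegree) : Prop :=
  e.toFun = f.toFun ∨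
    ∃ i : ℕ, (∀ j, j < i → e.toFun j = f.toFun j) ∧ e.toFun i < f.toFun i

/-- `HasStrengthDecomp f d s` : `f` (of degree `d`) is a sum of `s` products of pairs of
homogeneous polynomials of degrees strictly between `0` and `d`. -/
def HasStrengthDecomp {σ : Type*} {k : Type*} [Field k]
    (f : MvPolynomial σ k) (d : ℕ) (s : ℕ) : Prop :=
  ∃ (g h : Fin s → MvPolynomial σ k) (a b : Fin s → ℕ),
    (∀ i, 0 < a i ∧ a i < d ∧ 0 < b i ∧ b i < d ∧
      (g i).IsHomogeneous (a i) ∧ (h i).IsHomogeneous (b i)) ∧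
    f = ∑ i, g i * h i

/-- The strength of a homogeneous polynomial `f` of degree `d`, as an extended natural
number (`∞` if no decomposition exists). -/
noncomputable def strength {σ k : Type*} [Field k] (f : MvPolynomial σ k) (d : ℕ) : ℕ∞ :=
  sInf {s : ℕ∞ | ∃ m : ℕ, s = m ∧ HasStrengthDecomp f d m}

/-- The strength of a tuple of homogeneous polynomials of degrees `d i` : the minimal
strength of a nontrivial `k`-linear combination of entries of equal degree
(`∞` for the empty tuple). -/
noncomputable def tupleStrength {σ k : Type*} [Field k] {r : ℕ}
    (f : Fin r → MvPolynomial σ k) (d : Fin r → ℕ) : ℕ∞ :=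
  sInf {s : ℕ∞ | ∃ (c : Fin r → k) (e : ℕ), c ≠ 0 ∧ (∀ i, c i ≠ 0 → d i = e) ∧
    s = strength (∑ i, C (c i) * f i) e}

namespace RegAux

/-- The multiset of degrees of a multidegree. -/
def degs (E : MultiDegree) : Multiset ℕ := Multiset.map E.d Finset.univ.val

lemma card_degs (E : MultiDegree) : Multiset.card (degs E) = E.len := by
  simp [degs]

lemma one_le_of_mem_degs {E : MultiDegree} {x : ℕ} (hx : x ∈ degs E) : 1 ≤ x := by
  simp only [degs, Multiset.mem_map] at hx
  obtain ⟨i, -, rfl⟩ := hx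
  exact E.pos i

/-- Number of entries of `E` that are `≥ v`. -/
def N (E : MultiDegree) (v : ℕ) : ℕ := Multiset.countP (v ≤ ·) (degs E)

lemma N_eq_card (E : MultiDegree) (v : ℕ) :
    N E v = (Finset.univ.filter (fun i : Fin E.len => v ≤ E.d i)).card := by
  rw [N, degs, Multiset.countP_map]
  rfl

lemma lt_N_iff (E : MultiDegree) {v : ℕ} (hv : 1 ≤ v) (j : ℕ) :
    j < N E v ↔ v ≤ E.toFun j := by
  rw [N_eq_card]
  constructor
  · intro h
    by_contra hc
    push_neg at hc
    rcases Nat.lt_or_ge j E.len with hj | hj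
    · have hc' : E.d ⟨j, hj⟩ < v := by
        simpa [MultiDegree.toFun, hj] using hc
      have hsub : (Finset.univ.filter (fun i : Fin E.len => v ≤ E.d i)) ⊆
          Finset.Iio ⟨j, hj⟩ := by
        intro i hi
        simp only [Finset.mem_filter] at hi
        rw [Finset.mem_Iio]
        by_contra hij
        push_neg at hij
        exact absurd (le_trans hi.2 (E.anti hij)) (not_le.mpr hc')
      have h2 : (Finset.univ.filter (fun i : Fin E.len => v ≤ E.d i)).card ≤ j := by
        simpa using Finset.card_le_card hsub
      omega
    · have : (Finset.univ.filter (fun i : Fin E.len => v ≤ E.d i)).card ≤ E.len := by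
        exact le_trans (Finset.card_filter_le _ _) (by simp)
      omega
  · intro h
    have hj : j < E.len := by
      by_contra hj
      simp [MultiDegree.toFun, hj] at h
      omega
    have hd : v ≤ E.d ⟨j, hj⟩ := by simpa [MultiDegree.toFun, hj] using h
    have hsub : Finset.Iic (⟨j, hj⟩ : Fin E.len) ⊆
        Finset.univ.filter (fun i : Fin E.len => v ≤ E.d i) := by
      intro i hi
      rw [Finset.mem_Iic] at hi
      simp only [Finset.mem_filter, Finset.mem_univ, true_and]
      exact le_trans hd (E.anti hi)
    have h2 : j + 1 ≤ (Finset.univ.filter (fun i : Fin E.len => v ≤ E.d i)).card := by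
      simpa using Finset.card_le_card hsub
    omega

lemma le_of_counts {A B : MultiDegree} {e : ℕ} (he : 1 ≤ e)
    (hgt : ∀ v, e < v → N A v = N B v) (hlt : N A e < N B e) :
    MultiDegree.le A B := by
  refine Or.inr ⟨N A e, ?_, ?_⟩
  · intro j hj
    have hA : e ≤ A.toFun j := (lt_N_iff A he j).mp hj
    have hB : e ≤ B.toFun j := (lt_N_iff B he j).mp (hj.trans hlt)
    have key : ∀ v, e < v → (v ≤ A.toFun j ↔ v ≤ B.toFun j) := by
      intro v hv
      rw [← lt_N_iff A (by omega) j, ← lt_N_iff B (by omega) j, hgt v hv]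
    rcases Nat.lt_trichotomy (A.toFun j) (B.toFun j) with h | h | h
    · have := (key (B.toFun j) (by omega)).mpr le_rfl; omega
    · exact h
    · have := (key (A.toFun j) (by omega)).mp le_rfl; omega
  · have h1 : ¬ e ≤ A.toFun (N A e) := fun hc => lt_irrefl _ ((lt_N_iff A he _).mpr hc)
    have h2 : e ≤ B.toFun (N A e) := (lt_N_iff B he _).mp hlt
    omega

lemma le_trans' {A B C : MultiDegree} (h1 : A.le B) (h2 : B.le C) : A.le C := by
  rcases h1 with h1 | ⟨i, hi, hlt⟩
  · rw [MultiDegree.le, h1]; exact h2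
  rcases h2 with h2 | ⟨i', hi', hlt'⟩
  · rw [MultiDegree.le, ← h2]; exact Or.inr ⟨i, hi, hlt⟩
  right
  rcases Nat.lt_trichotomy i i' with h | rfl | h
  · exact ⟨i, fun j hj => (hi j hj).trans (hi' j (hj.trans h)),
      by rw [← hi' i h]; exact hlt⟩
  · exact ⟨i, fun j hj => (hi j hj).trans (hi' j hj), lt_trans hlt hlt'⟩
  · exact ⟨i', fun j hj => (hi j (hj.trans h)).trans (hi' j hj),
      by rw [hi i' h]; exact hlt'⟩

lemma step_le {A B : MultiDegree} {Z Y : Multiset ℕ} {e : ℕ}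
    (hB : degs B = Z + {e}) (hA : degs A = Z + Y) (hY : ∀ y ∈ Y, y < e) :
    MultiDegree.le A B := by
  have he : 1 ≤ e := one_le_of_mem_degs (by rw [hB]; simp)
  have hYzero : ∀ v, e ≤ v → Multiset.countP (v ≤ ·) Y = 0 := by
    intro v hv
    rw [Multiset.countP_eq_zero]
    intro y hy
    have := hY y hy
    omega
  apply le_of_counts he
  · intro v hv
    simp only [N, hA, hB, Multiset.countP_add]
    rw [hYzero v (le_of_lt hv)]
    have : Multiset.countP (v ≤ ·) ({e} : Multiset ℕ) = 0 := by
      rw [Multiset.countP_eq_zero]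
      intro y hy
      rw [Multiset.mem_singleton] at hy
      omega
    omega
  · simp only [N, hA, hB, Multiset.countP_add]
    rw [hYzero e le_rfl]
    have : Multiset.countP (e ≤ ·) ({e} : Multiset ℕ) = 1 := by
      rw [show ({e} : Multiset ℕ) = e ::ₘ 0 from rfl, Multiset.countP_cons]; simp
    omega

/-- Count function measure. -/
noncomputable def cnt (E : MultiDegree) : ℕ →₀ ℕ := (degs E).toFinsupp

/-- The well-founded relation used for the recursion. -/
def R (A B : MultiDegree) : Prop := Finsupp.Lex (· > ·) (· < ·) (cnt A) (cnt B)

lemma wf_R : WellFounded R := by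
  have hr : WellFounded ((· > · : ℕ → ℕ → Prop)ᶜ ⊓ (· ≠ ·)) := by
    have hsub : ∀ a b : ℕ, ((· > · : ℕ → ℕ → Prop)ᶜ ⊓ (· ≠ ·)) a b → a < b := by
      rintro a b ⟨h1, h2⟩
      simp only [Pi.compl_apply, compl_iff_not, gt_iff_lt, not_lt] at h1
      omega
    exact Subrelation.wf (fun {a b} h => hsub a b h) (Nat.lt_wfRel.wf)
  have h := Finsupp.Lex.wellFounded (r := (· > · : ℕ → ℕ → Prop))
    (s := (· < · : ℕ → ℕ → Prop)) (fun n => Nat.not_lt_zero n) (Nat.lt_wfRel.wf) hr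
  exact InvImage.wf cnt h

lemma step_R {A B : MultiDegree} {Z Y : Multiset ℕ} {e : ℕ}
    (hB : degs B = Z + {e}) (hA : degs A = Z + Y) (hY : ∀ y ∈ Y, y < e) :
    R A B := by
  refine ⟨e, ?_, ?_⟩
  · intro v hv
    show (cnt A) v = (cnt B) v
    simp only [cnt, Multiset.toFinsupp_apply, hA, hB, Multiset.count_add]
    have h1 : Multiset.count v Y = 0 := by
      rw [Multiset.count_eq_zero]
      intro hy
      have := hY v hy
      simp only [gt_iff_lt] at hv
      omega
    have h2 : Multiset.count v ({e} : Multiset ℕ) = 0 := by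
      rw [Multiset.count_eq_zero, Multiset.mem_singleton]
      simp only [gt_iff_lt] at hv
      omega
    omega
  · show (cnt A) e < (cnt B) e
    simp only [cnt, Multiset.toFinsupp_apply, hA, hB, Multiset.count_add]
    have h1 : Multiset.count e Y = 0 := by
      rw [Multiset.count_eq_zero]
      intro hy
      exact absurd (hY e hy) (lt_irrefl e)
    have h2 : Multiset.count e ({e} : Multiset ℕ) = 1 := by simp
    omega

end RegAux

section Part2
open RegAux

namespace RegAux

lemma map_univ_equiv' {α β : Type*} [Fintype α] [Fintype β] (ε : β ≃ α) (w : α → ℕ) :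
    Multiset.map (fun b => w (ε b)) Finset.univ.val = Multiset.map w Finset.univ.val := by
  conv_rhs => rw [← Finset.map_univ_equiv ε]
  rw [Finset.map_val, Multiset.map_map]
  rfl

lemma exists_sorted {ι : Type} [Fintype ι] (w : ι → ℕ) (hw : ∀ i, 1 ≤ w i)
    {n : ℕ} {K : Type*} [Field K] (p : ι → MvPolynomial (Fin n) K)
    (hp : ∀ i, (p i).IsHomogeneous (w i)) :
    ∃ (E : MultiDegree) (g : Fin E.len → MvPolynomial (Fin n) K),
      E.len = Fintype.card ι ∧ (∀ j, (g j).IsHomogeneous (E.d j)) ∧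
      degs E = Multiset.map w Finset.univ.val ∧ Set.range g = Set.range p := by
  classical
  set r := Fintype.card ι with hr
  set eqv : ι ≃ Fin r := Fintype.equivFin ι with heqv
  set w' : Fin r → ℕ := fun j => w (eqv.symm j) with hw'
  set ε : Equiv.Perm (Fin r) := Fin.revPerm.trans (Tuple.sort w') with hε
  have hanti : Antitone (fun j => w' (ε j)) := by
    intro i j hij
    exact Tuple.monotone_sort w' (by simpa [ε] using Fin.rev_le_rev.mpr hij)
  refine ⟨⟨r, fun j => w' (ε j), hanti, fun j => hw _⟩,
    fun j => p (eqv.symm (ε j)), rfl, fun j => hp _, ?_, ?_⟩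
  · show Multiset.map (fun j => w' (ε j)) Finset.univ.val = _
    rw [map_univ_equiv' ε w']
    exact map_univ_equiv' eqv.symm w
  · have hsurj : Function.Surjective (fun j : Fin r => eqv.symm (ε j)) :=
      (eqv.symm.surjective.comp ε.surjective)
    exact hsurj.range_comp p

lemma md_ext {A B : MultiDegree} (h : A.len = B.len)
    (h2 : ∀ j, A.toFun j = B.toFun j) : A = B := by
  obtain ⟨la, da, _, _⟩ := A
  obtain ⟨lb, db, _, _⟩ := B
  simp only at h
  subst h
  have : da = db := by
    funext i
    have := h2 i.val
    simpa [MultiDegree.toFun, i.isLt] using this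
  subst this
  rfl

lemma finite_of_bounds (L M : ℕ) :
    Finite {E : MultiDegree // E.len ≤ L ∧ ∀ i, E.d i ≤ M} := by
  apply Finite.of_injective (β := Fin (L + 1) × (Fin L → Fin (M + 1)))
    (f := fun E => (⟨E.1.len, by omega⟩,
      fun j => ⟨E.1.toFun j, by
        by_cases h : (j : ℕ) < E.1.len
        · have := E.2.2 ⟨j, h⟩
          simp only [MultiDegree.toFun, dif_pos h]
          omega
        · simp only [MultiDegree.toFun, dif_neg h]
          omega⟩))
  rintro ⟨E1, hE1⟩ ⟨E2, hE2⟩ hEq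
  simp only [Prod.mk.injEq, Fin.mk.injEq] at hEq
  obtain ⟨hlen, hfun⟩ := hEq
  have hfun' : ∀ j : Fin L, E1.toFun j = E2.toFun j := by
    intro j
    exact congrArg Fin.val (congrFun hfun j)
  refine Subtype.ext (md_ext hlen ?_)
  intro j
  by_cases hj : j < L
  · exact hfun' ⟨j, hj⟩
  · have h1 : ¬ j < E1.len := by omega
    have h2 : ¬ j < E2.len := by omega
    simp [MultiDegree.toFun, h1, h2]

end RegAux
end Part2

namespace RegAux

lemma exists_decomp_of_strength_lt {σ K : Type*} [Field K] {f : MvPolynomial σ K} {d t : ℕ}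
    (h : strength f d < (t : ℕ∞) + 1) : ∃ m : ℕ, m ≤ t ∧ HasStrengthDecomp f d m := by
  rw [strength, sInf_lt_iff] at h
  obtain ⟨x, ⟨m, rfl, hm⟩, hx⟩ := h
  refine ⟨m, ?_, hm⟩
  have := (ENat.lt_add_one_iff (ENat.coe_ne_top t)).mp hx
  exact_mod_cast this

def Works (k : Type*) [Field k] (Φ : MultiDegree → ℕ) (D : MultiDegree) (s : ℕ) : Prop :=
  ∀ (n : ℕ) (f : Fin D.len → MvPolynomial (Fin n) k),
    (∀ i, (f i).IsHomogeneous (D.d i)) →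
    ∃ (E : MultiDegree) (g : Fin E.len → MvPolynomial (Fin n) k),
      MultiDegree.le E D ∧ E.len ≤ s ∧
      (∀ j, (g j).IsHomogeneous (E.d j)) ∧
      (Φ E : ℕ∞) < tupleStrength g E.d ∧
      ∀ i, f i ∈ Algebra.adjoin k (Set.range g)

lemma works_mono {k : Type*} [Field k] {Φ : MultiDegree → ℕ} {D : MultiDegree} {s s' : ℕ}
    (h : s ≤ s') (hw : Works k Φ D s) : Works k Φ D s' := by
  intro n f hf
  obtain ⟨E, g, h1, h2, h3, h4, h5⟩ := hw n f hf
  exact ⟨E, g, h1, le_trans h2 h, h3, h4, h5⟩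

end RegAux

namespace RegAux

lemma reg_aux (k : Type*) [Field k] (Φ : MultiDegree → ℕ) :
    ∀ D : MultiDegree, ∃ s : ℕ, Works k Φ D s := by
  intro D0
  refine wf_R.induction (C := fun D => ∃ s : ℕ, Works k Φ D s) D0 ?_
  clear D0
  intro D ih
  classical
  set L : ℕ := D.len + 2 * Φ D with hL
  set M : ℕ := if h : 0 < D.len then D.d ⟨0, h⟩ else 0 with hM
  haveI hfin1 : Finite {E : MultiDegree // E.len ≤ L ∧ ∀ i, E.d i ≤ M} :=
    finite_of_bounds L M
  haveI hfin : Finite {E : MultiDegree // R E D ∧ E.len ≤ L ∧ ∀ i, E.d i ≤ M} := by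
    refine Finite.of_injective (β := {E : MultiDegree // E.len ≤ L ∧ ∀ i, E.d i ≤ M})
      (fun E => ⟨E.1, E.2.2⟩) ?_
    rintro ⟨a, ha⟩ ⟨b, hb⟩ h
    simpa using congrArg Subtype.val h
  have hF : ∀ E : {E : MultiDegree // R E D ∧ E.len ≤ L ∧ ∀ i, E.d i ≤ M},
      ∃ s, Works k Φ E.1 s := fun E => ih E.1 E.2.1
  choose F hFspec using hF
  obtain ⟨s0, hs0⟩ := Finite.exists_le F
  refine ⟨max D.len s0, ?_⟩
  intro n f hf
  by_cases hcase : (Φ D : ℕ∞) < tupleStrength f D.d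
  · exact ⟨D, f, Or.inl rfl, le_max_left _ _, hf, hcase,
      fun i => Algebra.subset_adjoin ⟨i, rfl⟩⟩
  push_neg at hcase
  have h2 : tupleStrength f D.d < (Φ D : ℕ∞) + 1 :=
    lt_of_le_of_lt hcase ((ENat.lt_add_one_iff (ENat.coe_ne_top _)).mpr le_rfl)
  rw [tupleStrength, sInf_lt_iff] at h2
  obtain ⟨x, ⟨c, e, hc, hde, rfl⟩, hx⟩ := h2
  obtain ⟨m, hm, G, H, a, b, hGH, hFeq⟩ := exists_decomp_of_strength_lt hx
  obtain ⟨i0, hi0⟩ := Function.ne_iff.mp hc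
  have he : D.d i0 = e := hde i0 hi0
  have hlen0 : 0 < D.len := i0.pos
  have hMpos : M = D.d ⟨0, hlen0⟩ := by rw [hM, dif_pos hlen0]
  set s1 : Finset (Fin D.len) := Finset.univ.erase i0 with hs1
  set ι : Type := {x // x ∈ s1} ⊕ (Fin m ⊕ Fin m) with hι
  set w : ι → ℕ := Sum.elim (fun x => D.d x.1) (Sum.elim a b) with hwdef
  set p : ι → MvPolynomial (Fin n) k := Sum.elim (fun x => f x.1) (Sum.elim G H) with hpdef
  have hw : ∀ i, 1 ≤ w i := by
    rintro (x | (j | j))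
    · exact D.pos x.1
    · exact (hGH j).1
    · exact (hGH j).2.2.1
  have hp : ∀ i, (p i).IsHomogeneous (w i) := by
    rintro (x | (j | j))
    · exact hf x.1
    · exact (hGH j).2.2.2.2.1
    · exact (hGH j).2.2.2.2.2
  obtain ⟨E', g', hlen', hhom', hdegs', hrange'⟩ := exists_sorted w hw p hp
  set Z : Multiset ℕ := Multiset.map D.d s1.val with hZ
  set Y : Multiset ℕ :=
    Multiset.map a Finset.univ.val + Multiset.map b Finset.univ.val with hY
  have hYlt : ∀ y ∈ Y, y < e := by
    intro y hy
    rcases Multiset.mem_add.mp hy with h | h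
    · obtain ⟨j, -, rfl⟩ := Multiset.mem_map.mp h
      exact (hGH j).2.1
    · obtain ⟨j, -, rfl⟩ := Multiset.mem_map.mp h
      exact (hGH j).2.2.2.1
  have huniv : (Finset.univ : Finset (Fin D.len)).val = i0 ::ₘ s1.val := by
    rw [hs1, Finset.erase_val]
    exact (Multiset.cons_erase (by simp : i0 ∈ (Finset.univ : Finset (Fin D.len)).val)).symm
  have hdegsD : degs D = Z + {e} := by
    rw [degs, huniv, Multiset.map_cons, he, ← Multiset.singleton_add, add_comm]
  have hdegsE' : degs E' = Z + Y := by
    rw [hdegs']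
    have huι : (Finset.univ : Finset ι).val =
        Multiset.map Sum.inl (Finset.univ.val) + Multiset.map Sum.inr (Finset.univ.val) := by
      rw [← Finset.univ_disjSum_univ]
      rfl
    have huσ : (Finset.univ : Finset (Fin m ⊕ Fin m)).val =
        Multiset.map Sum.inl (Finset.univ.val) + Multiset.map Sum.inr (Finset.univ.val) := by
      rw [← Finset.univ_disjSum_univ]
      rfl
    rw [huι, Multiset.map_add, Multiset.map_map, Multiset.map_map]
    have hleft : Multiset.map (w ∘ Sum.inl) (Finset.univ : Finset {x // x ∈ s1}).val = Z := by
      show Multiset.map (fun x : {x // x ∈ s1} => D.d x.1) (Finset.univ).val = Z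
      rw [Finset.univ_eq_attach]
      rw [hZ, ← Multiset.attach_map_val' s1.val (fun x => D.d x)]
      rfl
    have hright : Multiset.map (w ∘ Sum.inr) (Finset.univ : Finset (Fin m ⊕ Fin m)).val = Y := by
      rw [huσ, Multiset.map_add, Multiset.map_map, Multiset.map_map]
      rfl
    rw [hleft, hright]
  have hRE' : R E' D := step_R hdegsD hdegsE' hYlt
  have hlenE' : E'.len ≤ L := by
    rw [hlen']
    have hcard : Fintype.card ι = s1.card + (m + m) := by
      simp [hι, Fintype.card_sum]
    have hs1card : s1.card = D.len - 1 := by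
      simp [hs1, Finset.card_erase_of_mem]
    rw [hcard, hs1card, hL]
    omega
  have hdE' : ∀ i, E'.d i ≤ M := by
    intro i
    have hmem : E'.d i ∈ degs E' := Multiset.mem_map_of_mem _ (by simp)
    rw [hdegsE'] at hmem
    have he0 : e ≤ D.d ⟨0, hlen0⟩ := he ▸ D.anti (by simp [Fin.le_def])
    rcases Multiset.mem_add.mp hmem with hz | hy
    · obtain ⟨j, -, hj⟩ := Multiset.mem_map.mp hz
      rw [← hj, hMpos]
      exact D.anti (by simp [Fin.le_def])
    · have := hYlt _ hy
      rw [hMpos]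
      omega
  have hWorks : Works k Φ E' (max D.len s0) :=
    works_mono (le_trans (hs0 ⟨E', hRE', hlenE', hdE'⟩) (le_max_right _ _))
      (hFspec ⟨E', hRE', hlenE', hdE'⟩)
  obtain ⟨E, g, hle, hlen, hhom, hstr', hadj⟩ := hWorks n g' hhom'
  refine ⟨E, g, le_trans' hle (step_le hdegsD hdegsE' hYlt), hlen, hhom, hstr', ?_⟩
  have hpmem : ∀ x : ι, p x ∈ Algebra.adjoin k (Set.range g) := by
    intro x
    have hx' : p x ∈ Set.range g' := by rw [hrange']; exact ⟨x, rfl⟩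
    obtain ⟨j, hj⟩ := hx'
    exact hj ▸ hadj j
  have hCmem : ∀ y : k, (MvPolynomial.C y : MvPolynomial (Fin n) k) ∈
      Algebra.adjoin k (Set.range g) := by
    intro y
    have := Subalgebra.algebraMap_mem (Algebra.adjoin k (Set.range g)) y
    rwa [MvPolynomial.algebraMap_eq] at this
  intro i
  by_cases hii : i = i0
  · subst hii
    have hsplit : (∑ j, MvPolynomial.C (c j) * f j) =
        (∑ x ∈ s1, MvPolynomial.C (c x) * f x) + MvPolynomial.C (c i) * f i := by
      rw [hs1]
      exact (Finset.sum_erase_add _ _ (Finset.mem_univ i)).symm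
    have hrepr : f i = MvPolynomial.C (c i)⁻¹ *
        ((∑ j, MvPolynomial.C (c j) * f j) - ∑ x ∈ s1, MvPolynomial.C (c x) * f x) := by
      rw [hsplit, add_sub_cancel_left, ← mul_assoc, ← MvPolynomial.C_mul,
        inv_mul_cancel₀ hi0, MvPolynomial.C_1, one_mul]
    rw [hrepr, hFeq]
    refine Subalgebra.mul_mem _ (hCmem _) (Subalgebra.sub_mem _ ?_ ?_)
    · exact Subalgebra.sum_mem _ (fun j _ =>
        Subalgebra.mul_mem _ (hpmem (Sum.inr (Sum.inl j))) (hpmem (Sum.inr (Sum.inr j))))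
    · exact Subalgebra.sum_mem _ (fun x hx =>
        Subalgebra.mul_mem _ (hCmem _) (hpmem (Sum.inl ⟨x, hx⟩)))
  · exact hpmem (Sum.inl ⟨i, by simp [hs1, hii]⟩)

end RegAux


/-- **Regularization.** For a fixed multi-degree `D` and any function `Φ` on
multi-degrees, there exists `s` such that: any tuple `f` of homogeneous polynomials of
multi-degree `D` (in any number of variables) is contained in the `k`-subalgebra generated
by a tuple `g` of homogeneous polynomials whose multi-degree `E ≤ D` has length at most
`s` and whose strength exceeds `Φ(E)`. -/
theorem regularization (k : Type*) [Field k] [Infinite k]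
    (D : MultiDegree) (Φ : MultiDegree → ℕ) :
    ∃ s : ℕ, ∀ (n : ℕ) (f : Fin D.len → MvPolynomial (Fin n) k),
      (∀ i, (f i).IsHomogeneous (D.d i)) →
      ∃ (E : MultiDegree) (g : Fin E.len → MvPolynomial (Fin n) k),
        MultiDegree.le E D ∧ E.len ≤ s ∧
        (∀ j, (g j).IsHomogeneous (E.d j)) ∧
        (Φ E : ℕ∞) < tupleStrength g E.d ∧
        ∀ i, f i ∈ Algebra.adjoin k (Set.range g) := by
  obtain ⟨s, hs⟩ := RegAux.reg_aux k Φ D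
  exact ⟨s, hs⟩
end

section
/- Let k be a field, let d_1 ≥ ... ≥ d_r ≥ 1 be integers, let a_1, ..., a_r ∈ k, let b_1, ..., b_r ∈ k be nonzero, and for each i ∈ {1, ..., r} let h_i be a polynomial in the variables x_{i+1}, y_{i+1}, z_{i+1}, ..., x_r, y_r, z_r, w_1, ..., w_m. Then the polynomials f_i = x_i y_i^{d_i−1} + a_i y_i^{d_i} + b_i z_i^{d_i} + h_i, for i = 1, ..., r, form a prime sequence in the polynomial ring k[x_1, y_1, z_1, ..., x_r, y_r, z_r, w_1, ..., w_m]. -/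
open MvPolynomial


/-- Elements `f_1, …, f_r` of a commutative ring form a *prime sequence* if each ideal
`I_i = (f_1, …, f_i)` is prime and the `I_i` are strictly increasing. -/
def IsPrimeSequence {R : Type*} [CommRing R] {r : ℕ} (f : Fin r → R) : Prop :=
  (∀ i : Fin r, (Ideal.span (f '' {j | j ≤ i})).IsPrime) ∧
    ∀ i j : Fin r, i < j →
      Ideal.span (f '' {j' | j' ≤ i}) < Ideal.span (f '' {j' | j' ≤ j})


lemma eis_aux (F1 : Type*) [Field F1] (d : ℕ) (hd : 1 ≤ d) (u v : F1) (hu : u ≠ 0) :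
    Irreducible ((Polynomial.X ^ d + Polynomial.C (Polynomial.C u * Polynomial.X + Polynomial.C v) :
      Polynomial (Polynomial F1)).map (algebraMap (Polynomial F1) (RatFunc F1))) := by
  set π : Polynomial F1 := Polynomial.C u * Polynomial.X + Polynomial.C v with hπ
  set G : Polynomial (Polynomial F1) := Polynomial.X ^ d + Polynomial.C π with hG
  have hGmonic : G.Monic := by
    have : (Polynomial.C π).degree < (Polynomial.X ^ d : Polynomial (Polynomial F1)).degree := by
      rw [Polynomial.degree_X_pow]
      exact lt_of_le_of_lt Polynomial.degree_C_le (by exact_mod_cast Nat.pos_of_ne_zero (by omega))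
    exact (Polynomial.monic_X_pow d).add_of_left this
  have hdegG : G.degree = d := by
    rw [hG]
    rw [Polynomial.degree_add_eq_left_of_degree_lt, Polynomial.degree_X_pow]
    rw [Polynomial.degree_X_pow]
    exact lt_of_le_of_lt Polynomial.degree_C_le (by exact_mod_cast Nat.pos_of_ne_zero (by omega))
  set α : F1 := -v / u with hα
  have hπfac : π = (Polynomial.X - Polynomial.C α) * Polynomial.C u := by
    have h1 : (-v / u) * u = -v := div_mul_cancel₀ _ hu
    rw [hπ, hα, sub_mul, ← Polynomial.C_mul, h1, Polynomial.C_neg]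
    ring
  set P : Ideal (Polynomial F1) := Ideal.span {Polynomial.X - Polynomial.C α} with hP
  have hXα : (Polynomial.X - Polynomial.C α : Polynomial F1) ≠ 0 := Polynomial.X_sub_C_ne_zero α
  have hPprime : P.IsPrime := (Ideal.span_singleton_prime hXα).mpr (Polynomial.prime_X_sub_C α)
  have hπP : π ∈ P := hπfac ▸ Ideal.mul_mem_right _ _ (Ideal.subset_span rfl)
  have hπ0 : π ≠ 0 := by
    intro h0
    have := Polynomial.degree_linear (b := v) hu
    rw [← hπ, h0] at this
    simp at this
  have hGirr : Irreducible G := by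
    apply Polynomial.irreducible_of_eisenstein_criterion hPprime
    · rw [hGmonic.leadingCoeff]
      exact fun h1 => hPprime.ne_top (Ideal.eq_top_of_isUnit_mem _ h1 isUnit_one)
    · intro n hn
      rw [hdegG, Nat.cast_lt] at hn
      rw [hG]
      simp only [Polynomial.coeff_add, Polynomial.coeff_X_pow, Polynomial.coeff_C]
      rw [if_neg (by omega)]
      by_cases hn0 : n = 0
      · simpa [hn0] using hπP
      · simp [hn0]
    · rw [hdegG]; exact_mod_cast Nat.pos_of_ne_zero (by omega)
    · have hd0 : ¬ (0 = d) := by omega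
      have hcoeff0 : G.coeff 0 = π := by
        rw [hG]; simp [Polynomial.coeff_X_pow, hd0]
      rw [hcoeff0, hP, Ideal.span_singleton_pow]
      intro hmem
      have hdvd := Ideal.mem_span_singleton.mp hmem
      have := Polynomial.degree_le_of_dvd hdvd hπ0
      rw [hπfac] at this
      rw [Polynomial.degree_mul, Polynomial.degree_C hu] at this
      have h2 : ((Polynomial.X - Polynomial.C α) ^ 2 : Polynomial F1).degree = 2 := by
        rw [Polynomial.degree_pow, Polynomial.degree_X_sub_C]; rfl
      rw [h2, Polynomial.degree_X_sub_C, add_zero] at this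
      exact absurd this (by decide)
    · exact hGmonic.isPrimitive
  exact (hGmonic.irreducible_iff_irreducible_map_fraction_map).mp hGirr

lemma span_monic_prime {B K : Type*} [CommRing B] [IsDomain B] [Field K]
    (ψ : B →+* K) (hψ : Function.Injective ψ) {g : Polynomial B} (hg : g.Monic)
    (hirr : Irreducible (g.map ψ)) :
    (Ideal.span {g}).IsPrime ∧
      ∀ t : B, Polynomial.C t ∈ Ideal.span ({g} : Set (Polynomial B)) → t = 0 := by
  have hdeg : 0 < g.natDegree := by
    by_contra hle
    have h0 : g.natDegree = 0 := by omega
    rw [hg.natDegree_eq_zero.mp h0, Polynomial.map_one] at hirr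
    exact not_irreducible_one hirr
  have hprime : Prime g := by
    constructor
    · exact hg.ne_zero
    constructor
    · intro hu; exact hirr.not_isUnit (hu.map (Polynomial.mapRingHom ψ))
    · intro p q hpq
      have hKprime : Prime (g.map ψ) := hirr.prime
      have : g.map ψ ∣ (p.map ψ) * (q.map ψ) := by
        rw [← Polynomial.map_mul]; exact Polynomial.map_dvd _ hpq
      rcases hKprime.2.2 _ _ this with hd | hd
      · exact Or.inl ((Polynomial.map_dvd_map ψ hψ hg).mp hd)
      · exact Or.inr ((Polynomial.map_dvd_map ψ hψ hg).mp hd)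
  refine ⟨(Ideal.span_singleton_prime hg.ne_zero).mpr hprime, ?_⟩
  intro t ht
  by_contra ht0
  obtain ⟨s, hs⟩ := Ideal.mem_span_singleton.mp ht
  have hC0 : (Polynomial.C t : Polynomial B) ≠ 0 := fun hc => ht0 (Polynomial.C_injective.eq_iff.mp (by simpa using hc))
  have hs0 : s ≠ 0 := fun hc => hC0 (by rw [hs, hc, mul_zero])
  have := Polynomial.natDegree_mul hg.ne_zero hs0
  rw [← hs, Polynomial.natDegree_C] at this
  omega

section PsiCore

variable (T : Type*) [CommRing T] [IsDomain T]

/-- fraction field of `T` -/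
noncomputable abbrev myF := FractionRing T

/-- the map `F[y] → F(y)` with `y` the mv-variable -/
noncomputable def ΘRing : MvPolynomial (Fin 1) (myF T) →+* RatFunc (myF T) :=
  ((algebraMap (Polynomial (myF T)) (RatFunc (myF T))).comp
      (Polynomial.mapRingHom (isEmptyAlgEquiv (myF T) (Fin 0)).toAlgHom.toRingHom)).comp
    (MvPolynomial.finSuccEquiv (myF T) 0).toAlgHom.toRingHom

lemma ΘRing_inj : Function.Injective (ΘRing T) := by
  unfold ΘRing
  simp only [RingHom.coe_comp, AlgHom.toRingHom_eq_coe, RingHom.coe_coe, AlgHom.coe_coe]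
  exact (Function.Injective.comp (IsFractionRing.injective (Polynomial (myF T)) (RatFunc (myF T)))
    (Polynomial.map_injective _ (isEmptyAlgEquiv (myF T) (Fin 0)).injective)).comp
    (MvPolynomial.finSuccEquiv (myF T) 0).injective

/-- the map `T[x,y] → F(y)[x]` ; variable `0` is `x` (outer), variable `1` is `y`. -/
noncomputable def ΨCore : MvPolynomial (Fin 2) T →+* Polynomial (RatFunc (myF T)) :=
  ((Polynomial.mapRingHom (ΘRing T)).comp
      (MvPolynomial.finSuccEquiv (myF T) 1).toAlgHom.toRingHom).comp
    (MvPolynomial.map (algebraMap T (myF T)))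

lemma ΨCore_inj : Function.Injective (ΨCore T) := by
  unfold ΨCore
  simp only [RingHom.coe_comp, AlgHom.toRingHom_eq_coe, RingHom.coe_coe, AlgHom.coe_coe]
  exact (Function.Injective.comp (Polynomial.map_injective _ (ΘRing_inj T))
    (MvPolynomial.finSuccEquiv (myF T) 1).injective).comp
    (MvPolynomial.map_injective _ (IsFractionRing.injective T (myF T)))

lemma ΨCore_X0 : ΨCore T (X 0) = Polynomial.X := by
  unfold ΨCore
  simp only [RingHom.comp_apply, MvPolynomial.map_X, AlgHom.toRingHom_eq_coe, RingHom.coe_coe,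
    AlgHom.coe_coe, AlgEquiv.coe_algHom, finSuccEquiv_X_zero, Polynomial.coe_mapRingHom, Polynomial.map_X]

lemma ΨCore_X1 : ΨCore T (X 1) = Polynomial.C (ΘRing T (X 0)) := by
  unfold ΨCore
  simp only [RingHom.comp_apply, MvPolynomial.map_X, AlgHom.toRingHom_eq_coe, RingHom.coe_coe,
    AlgHom.coe_coe, AlgEquiv.coe_algHom, Polynomial.coe_mapRingHom]
  rw [show (1 : Fin 2) = Fin.succ 0 from rfl, finSuccEquiv_X_succ, Polynomial.map_C]

lemma ΨCore_C (t : T) :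
    ΨCore T (C t) = Polynomial.C (ΘRing T (C (algebraMap T (myF T) t))) := by
  unfold ΨCore
  simp only [RingHom.comp_apply, MvPolynomial.map_C, AlgHom.toRingHom_eq_coe, RingHom.coe_coe,
    AlgHom.coe_coe, AlgEquiv.coe_algHom, Polynomial.coe_mapRingHom]
  rw [show (MvPolynomial.finSuccEquiv (myF T) 1) (C (algebraMap T (myF T) t))
      = Polynomial.C (C (algebraMap T (myF T) t)) by rw [finSuccEquiv_apply]; simp,
    Polynomial.map_C]

lemma ΘX_ne_zero : ΘRing T (X 0) ≠ 0 := fun h0 =>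
  MvPolynomial.X_ne_zero (0 : Fin 1) (ΘRing_inj T (by rw [h0, map_zero]))

end PsiCore

lemma lemA {k : Type*} [Field k] {T : Type*} [CommRing T] [IsDomain T] [Algebra k T]
    (d : ℕ) (hd : 1 ≤ d) (a h : T) (b : k) (hb : b ≠ 0) :
    (Ideal.span {(X 1 * X 2 ^ (d-1) + C a * X 2 ^ d + C (algebraMap k T b) * X 0 ^ d + C h :
        MvPolynomial (Fin 3) T)}).IsPrime ∧
      ∀ t : T, C t ∈ Ideal.span {(X 1 * X 2 ^ (d-1) + C a * X 2 ^ d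
          + C (algebraMap k T b) * X 0 ^ d + C h : MvPolynomial (Fin 3) T)} → t = 0 := by
  have hd0 : 0 < d := hd
  set f : MvPolynomial (Fin 3) T :=
    X 1 * X 2 ^ (d-1) + C a * X 2 ^ d + C (algebraMap k T b) * X 0 ^ d + C h with hf
  set Φ : MvPolynomial (Fin 3) T ≃ₐ[T] Polynomial (MvPolynomial (Fin 2) T) :=
    MvPolynomial.finSuccEquiv T 2 with hΦ
  have hΦC : ∀ t : T, Φ (C t) = Polynomial.C (C t) := fun t => by
    rw [hΦ, finSuccEquiv_apply]; simp
  have e0 : Φ (X 0) = Polynomial.X := finSuccEquiv_X_zero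
  have e1 : Φ (X 1) = Polynomial.C (X 0) := by
    rw [hΦ, show (1 : Fin 3) = Fin.succ 0 from rfl, finSuccEquiv_X_succ]
  have e2 : Φ (X 2) = Polynomial.C (X 1) := by
    rw [hΦ, show (2 : Fin 3) = Fin.succ 1 from rfl, finSuccEquiv_X_succ]
  set c : MvPolynomial (Fin 2) T := X 0 * X 1 ^ (d-1) + C a * X 1 ^ d + C h with hc
  have hΦf : Φ f = Polynomial.C (MvPolynomial.C (algebraMap k T b)) * Polynomial.X ^ d
      + Polynomial.C c := by
    rw [hf, hc]
    simp only [map_add, map_mul, map_pow, e0, e1, e2, hΦC]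
    ring
  set bu : T := algebraMap k T b with hbu
  set bi : T := algebraMap k T b⁻¹ with hbi
  have hbiu : bi * bu = 1 := by
    rw [hbi, hbu, ← map_mul, inv_mul_cancel₀ hb, map_one]
  have hbi0 : bi ≠ 0 := by
    intro h0; rw [h0, zero_mul] at hbiu; exact zero_ne_one hbiu
  set g : Polynomial (MvPolynomial (Fin 2) T) :=
    Polynomial.X ^ d + Polynomial.C (C bi * c) with hg
  have hfg : Polynomial.C (MvPolynomial.C bi) * Φ f = g := by
    rw [hΦf, hg, mul_add, ← mul_assoc, ← Polynomial.C_mul, ← MvPolynomial.C_mul, hbiu,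
      MvPolynomial.C_1, Polynomial.C_1, one_mul, ← Polynomial.C_mul]
  have hbiunit : IsUnit (Polynomial.C (MvPolynomial.C bi) :
      Polynomial (MvPolynomial (Fin 2) T)) := by
    have : IsUnit bi := IsUnit.of_mul_eq_one _ hbiu
    exact ((this.map (MvPolynomial.C (σ := Fin 2))).map Polynomial.C)
  have hspan : Ideal.span {Φ f} = Ideal.span {g} := by
    rw [← hfg]; exact (Ideal.span_singleton_mul_left_unit hbiunit _).symm
  have hgmonic : g.Monic := by
    apply (Polynomial.monic_X_pow d).add_of_left
    rw [Polynomial.degree_X_pow]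
    exact lt_of_le_of_lt Polynomial.degree_C_le (by exact_mod_cast hd0)
  -- the injection into a big field
  set ψ : MvPolynomial (Fin 2) T →+* RatFunc (RatFunc (myF T)) :=
    (algebraMap (Polynomial (RatFunc (myF T))) (RatFunc (RatFunc (myF T)))).comp (ΨCore T)
    with hψdef
  have hψinj : Function.Injective ψ := by
    rw [hψdef, RingHom.coe_comp]
    exact (IsFractionRing.injective (Polynomial (RatFunc (myF T)))
      (RatFunc (RatFunc (myF T)))).comp (ΨCore_inj T)
  set yy : RatFunc (myF T) := ΘRing T (X 0) with hyy
  have hyy0 : yy ≠ 0 := ΘX_ne_zero T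
  set χ : T →+* RatFunc (myF T) :=
    (ΘRing T).comp ((MvPolynomial.C : myF T →+* MvPolynomial (Fin 1) (myF T)).comp
      (algebraMap T (myF T))) with hχ
  have hχinj : Function.Injective χ := by
    rw [hχ]
    simp only [RingHom.coe_comp]
    exact ((ΘRing_inj T).comp (MvPolynomial.C_injective (Fin 1) (myF T))).comp
      (IsFractionRing.injective T (myF T))
  have hχapp : ∀ t : T, ΨCore T (C t) = Polynomial.C (χ t) := fun t => by
    rw [ΨCore_C, hχ]; rfl
  set u' : RatFunc (myF T) := χ bi * yy ^ (d-1) with hu'def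
  set v' : RatFunc (myF T) := χ bi * (χ a * yy ^ d + χ h) with hv'def
  have hcoree : ΨCore T (C bi * c) = Polynomial.C u' * Polynomial.X + Polynomial.C v' := by
    rw [hc, hu'def, hv'def]
    simp only [map_add, map_mul, map_pow, ΨCore_X0, ΨCore_X1, hχapp, ← hyy]
    ring
  have hu'0 : u' ≠ 0 := by
    rw [hu'def]
    exact mul_ne_zero (fun h0 => hbi0 (hχinj (by rw [h0, map_zero]))) (pow_ne_zero _ hyy0)
  have hirr : Irreducible (g.map ψ) := by
    have hmm : g.map ψ = (Polynomial.X ^ d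
        + Polynomial.C (Polynomial.C u' * Polynomial.X + Polynomial.C v')).map
          (algebraMap (Polynomial (RatFunc (myF T))) (RatFunc (RatFunc (myF T)))) := by
      rw [hψdef, ← Polynomial.map_map, hg]
      congr 1
      rw [Polynomial.map_add, Polynomial.map_pow, Polynomial.map_X, Polynomial.map_C, hcoree]
    rw [hmm]
    exact eis_aux (RatFunc (myF T)) d hd u' v' hu'0
  have hgK := span_monic_prime ψ hψinj hgmonic hirr
  -- transport back along Φ
  have key : ∀ w : MvPolynomial (Fin 3) T, w ∈ Ideal.span {f} ↔ Φ w ∈ Ideal.span {g} := by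
    intro w
    rw [← hspan, Ideal.mem_span_singleton, Ideal.mem_span_singleton]
    constructor
    · exact fun hw => map_dvd Φ hw
    · intro hw
      have := map_dvd Φ.symm hw
      simpa using this
  constructor
  · constructor
    · intro hT
      refine hgK.1.ne_top ((Ideal.eq_top_iff_one _).mpr ?_)
      have := (key 1).mp (by rw [hT]; trivial)
      rwa [map_one] at this
    · intro x y hxy
      have hm := (key _).mp hxy
      rw [map_mul] at hm
      rcases hgK.1.mem_or_mem hm with hh | hh
      · exact Or.inl ((key _).mpr hh)
      · exact Or.inr ((key _).mpr hh)
  · intro t ht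
    have := (key _).mp ht
    rw [hΦC] at this
    have h0 := hgK.2 (C t) this
    exact MvPolynomial.C_injective _ _ (by rw [h0, map_zero])

lemma lemD {k : Type*} [Field k] {A : Type*} [CommRing A] [Algebra k A]
    (p : Ideal A) (hp : p.IsPrime) (d : ℕ) (hd : 1 ≤ d) (a h : A) (b : k) (hb : b ≠ 0) :
    (Ideal.span {(X 1 * X 2 ^ (d-1) + C a * X 2 ^ d + C (algebraMap k A b) * X 0 ^ d + C h :
        MvPolynomial (Fin 3) A)} ⊔ p.map (C : A →+* MvPolynomial (Fin 3) A)).IsPrime ∧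
      ∀ t : A, C t ∈ Ideal.span {(X 1 * X 2 ^ (d-1) + C a * X 2 ^ d
          + C (algebraMap k A b) * X 0 ^ d + C h : MvPolynomial (Fin 3) A)}
            ⊔ p.map (C : A →+* MvPolynomial (Fin 3) A) → t ∈ p := by
  haveI := hp
  set f : MvPolynomial (Fin 3) A :=
    X 1 * X 2 ^ (d-1) + C a * X 2 ^ d + C (algebraMap k A b) * X 0 ^ d + C h with hf
  set Φ : MvPolynomial (Fin 3) A →+* MvPolynomial (Fin 3) (A ⧸ p) :=
    (MvPolynomial.map (Ideal.Quotient.mk p) : MvPolynomial (Fin 3) A →+* _) with hΦ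
  have hsurj : Function.Surjective Φ :=
    MvPolynomial.map_surjective _ Ideal.Quotient.mk_surjective
  have hker : RingHom.ker Φ = p.map (C : A →+* MvPolynomial (Fin 3) A) := by
    rw [hΦ, MvPolynomial.ker_map, Ideal.mk_ker]
  have halg : ∀ x : k, Ideal.Quotient.mk p (algebraMap k A x) = algebraMap k (A ⧸ p) x :=
    fun x => rfl
  have hΦf : Φ f = X 1 * X 2 ^ (d-1) + C (Ideal.Quotient.mk p a) * X 2 ^ d
      + C (algebraMap k (A ⧸ p) b) * X 0 ^ d + C (Ideal.Quotient.mk p h) := by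
    rw [hf, hΦ]
    simp only [map_add, map_mul, map_pow, MvPolynomial.map_X, MvPolynomial.map_C, halg]
  have hA := lemA (k := k) (T := A ⧸ p) d hd (Ideal.Quotient.mk p a) (Ideal.Quotient.mk p h) b hb
  have hcm : Ideal.comap Φ (Ideal.span {Φ f})
      = Ideal.span {f} ⊔ p.map (C : A →+* MvPolynomial (Fin 3) A) := by
    rw [← Set.image_singleton, ← Ideal.map_span, Ideal.comap_map_of_surjective Φ hsurj,
      ← RingHom.ker_eq_comap_bot, hker]
  constructor
  · rw [← hcm]
    haveI : (Ideal.span {Φ f}).IsPrime := by rw [hΦf]; exact hA.1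
    exact Ideal.IsPrime.comap Φ
  · intro t ht
    rw [← hcm, Ideal.mem_comap] at ht
    rw [hΦ, MvPolynomial.map_C] at ht
    rw [hΦf] at ht
    have := hA.2 (Ideal.Quotient.mk p t) ht
    exact (Ideal.Quotient.eq_zero_iff_mem).mp this

section helpers

lemma sumAlgEquiv_X_inl {R S₁ S₂ : Type*} [CommSemiring R] (s : S₁) :
    sumAlgEquiv R S₁ S₂ (X (Sum.inl s)) = X s := by
  exact MvPolynomial.sumAlgEquiv_X_inl R S₁ S₂ s

lemma sumAlgEquiv_X_inr {R S₁ S₂ : Type*} [CommSemiring R] (s : S₂) :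
    sumAlgEquiv R S₁ S₂ (X (Sum.inr s)) = C (X s) := by
  exact MvPolynomial.sumAlgEquiv_X_inr R S₁ S₂ s

lemma sumAlgEquiv_C' {R S₁ S₂ : Type*} [CommSemiring R] (x : R) :
    sumAlgEquiv R S₁ S₂ (C x) = C (C x) := by
  exact MvPolynomial.sumAlgEquiv_C_inl R S₁ S₂ x

lemma sumAlgEquiv_rename_inr {R S₁ S₂ τ : Type*} [CommSemiring R] (v : τ → S₂)
    (q : MvPolynomial τ R) :
    sumAlgEquiv R S₁ S₂ (rename (Sum.inr ∘ v : τ → S₁ ⊕ S₂) q) = C (rename v q) := by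
  rw [← rename_rename]
  have h := DFunLike.congr_fun
    (sumAlgEquiv_comp_rename_inr (R := R) (S₁ := S₁) (S₂ := S₂)) (rename v q)
  simpa [MvPolynomial.algebraMap_eq] using h

lemma C_mem_map_C_iff {R : Type*} [CommRing R] {σ : Type*} (I : Ideal R) (x : R) :
    (C x : MvPolynomial σ R) ∈ I.map (C : R →+* MvPolynomial σ R) ↔ x ∈ I := by
  rw [MvPolynomial.mem_map_C_iff]
  constructor
  · intro H; simpa using H 0
  · intro hx m
    classical
    rw [MvPolynomial.coeff_C]
    split <;> simp [hx]

lemma isPrime_of_map_C {R : Type*} [CommRing R] {σ : Type*} (p : Ideal R)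
    (hp : (p.map (C : R →+* MvPolynomial σ R)).IsPrime) : p.IsPrime := by
  constructor
  · intro hT
    refine hp.ne_top ?_
    rw [Ideal.eq_top_iff_one] at hT ⊢
    simpa using (C_mem_map_C_iff (σ := σ) p 1).mpr hT
  · intro x y hxy
    have : (C (x * y) : MvPolynomial σ R) ∈ p.map C := (C_mem_map_C_iff _ _).mpr hxy
    rw [map_mul] at this
    rcases hp.mem_or_mem this with hh | hh
    · exact Or.inl ((C_mem_map_C_iff _ _).mp hh)
    · exact Or.inr ((C_mem_map_C_iff _ _).mp hh)

/-- the equivalence singling out block `t`, sending `z_t, x_t, y_t` to variables `0,1,2`. -/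
def blockEquiv (r m : ℕ) (t : Fin r) :
    ((Fin r × Fin 3) ⊕ Fin m) ≃ (Fin 3 ⊕ (({p : Fin r // p ≠ t} × Fin 3) ⊕ Fin m)) where
  toFun x :=
    match x with
    | .inl (p, s) => if h : p = t then .inl (finRotate 3 s) else .inr (.inl (⟨p, h⟩, s))
    | .inr w => .inr (.inr w)
  invFun x :=
    match x with
    | .inl s => .inl (t, (finRotate 3).symm s)
    | .inr (.inl (p, s)) => .inl (p.1, s)
    | .inr (.inr w) => .inr w
  left_inv := by
    rintro (⟨p, s⟩ | w)
    · by_cases h : p = t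
      · subst h; simp [Equiv.symm_apply_eq]
      · simp [h]
    · simp
  right_inv := by
    rintro (s | (⟨⟨p, hp⟩, s⟩ | w))
    · simp
    · simp [hp]
    · simp

lemma blockEquiv_inl_self (r m : ℕ) (t : Fin r) (s : Fin 3) :
    blockEquiv r m t (Sum.inl (t, s)) = Sum.inl (finRotate 3 s) := by
  simp [blockEquiv]

lemma blockEquiv_inl_ne (r m : ℕ) (t : Fin r) {p : Fin r} (hp : p ≠ t) (s : Fin 3) :
    blockEquiv r m t (Sum.inl (p, s)) = Sum.inr (Sum.inl (⟨p, hp⟩, s)) := by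
  simp [blockEquiv, hp]

lemma blockEquiv_inr (r m : ℕ) (t : Fin r) (w : Fin m) :
    blockEquiv r m t (Sum.inr w) = Sum.inr (Sum.inr w) := rfl

end helpers

section equivhelp
variable {R S : Type*} [CommRing R] [CommRing S]

lemma equiv_mem_map (e : R ≃+* S) (I : Ideal R) (x : R) :
    e x ∈ I.map e.toRingHom ↔ x ∈ I := by
  rw [show I.map e.toRingHom = I.comap e.symm from Ideal.map_comap_of_equiv e, Ideal.mem_comap]
  simp

lemma prime_of_equiv_map_prime (e : R ≃+* S) (I : Ideal R)
    (h : (I.map e.toRingHom).IsPrime) : I.IsPrime := by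
  constructor
  · intro hT
    apply h.ne_top
    rw [hT, Ideal.map_top]
  · intro x y hxy
    have hm : e (x * y) ∈ I.map e.toRingHom := (equiv_mem_map e I _).mpr hxy
    rw [map_mul] at hm
    rcases h.mem_or_mem hm with hh | hh
    · exact Or.inl ((equiv_mem_map e I x).mp hh)
    · exact Or.inr ((equiv_mem_map e I y).mp hh)

end equivhelp


/-- In `k[x_1,y_1,z_1, …, x_r,y_r,z_r, w_1, …, w_m]` (variables indexed by
`(Fin r × Fin 3) ⊕ Fin m`, where `(i,0), (i,1), (i,2)` are `x_i, y_i, z_i` and `inr j`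
is `w_j`), the polynomials
`f_i = x_i y_i^{d_i−1} + a_i y_i^{d_i} + b_i z_i^{d_i} + h_i`, with `b_i ≠ 0` and `h_i`
a polynomial in the variables `x_j, y_j, z_j` (`j > i`) and `w_1, …, w_m`, form a prime
sequence. -/
theorem normal_form_prime_sequence (k : Type*) [Field k] (r m : ℕ) (d : Fin r → ℕ)
    (hanti : Antitone d) (hpos : ∀ i, 1 ≤ d i)
    (a b : Fin r → k) (hb : ∀ i, b i ≠ 0)
    (h : ∀ i : Fin r, MvPolynomial (({ p : Fin r // i < p } × Fin 3) ⊕ Fin m) k) :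
    IsPrimeSequence (fun i : Fin r =>
      (X (Sum.inl (i, 0)) * X (Sum.inl (i, 1)) ^ (d i - 1)
        + C (a i) * X (Sum.inl (i, 1)) ^ (d i)
        + C (b i) * X (Sum.inl (i, 2)) ^ (d i)
        + rename (Sum.map (fun q : { p : Fin r // i < p } × Fin 3 => ((q.1 : Fin r), q.2)) id)
            (h i) :
        MvPolynomial ((Fin r × Fin 3) ⊕ Fin m) k)) := by
  classical
  set F : Fin r → MvPolynomial ((Fin r × Fin 3) ⊕ Fin m) k := fun i =>
      X (Sum.inl (i, 0)) * X (Sum.inl (i, 1)) ^ (d i - 1)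
        + C (a i) * X (Sum.inl (i, 1)) ^ (d i)
        + C (b i) * X (Sum.inl (i, 2)) ^ (d i)
        + rename (Sum.map (fun q : { p : Fin r // i < p } × Fin 3 => ((q.1 : Fin r), q.2)) id)
            (h i) with hFdef
  let eqv : (t : Fin r) → (MvPolynomial ((Fin r × Fin 3) ⊕ Fin m) k ≃ₐ[k]
      MvPolynomial (Fin 3) (MvPolynomial (({p : Fin r // p ≠ t} × Fin 3) ⊕ Fin m) k)) := fun t =>
    (renameEquiv k (blockEquiv r m t)).trans
      (sumAlgEquiv k (Fin 3) (({p : Fin r // p ≠ t} × Fin 3) ⊕ Fin m))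
  have heqvX_ne : ∀ (t : Fin r) {p : Fin r} (hp : p ≠ t) (s : Fin 3),
      eqv t (X (Sum.inl (p, s))) = C (X (Sum.inl (⟨p, hp⟩, s))) := by
    intro t p hp s
    show (sumAlgEquiv k (Fin 3) _) ((renameEquiv k (blockEquiv r m t)) (X (Sum.inl (p, s)))) = _
    rw [renameEquiv_apply, rename_X, blockEquiv_inl_ne r m t hp, sumAlgEquiv_X_inr]
  have heqvX_self : ∀ (t : Fin r) (s : Fin 3),
      eqv t (X (Sum.inl (t, s))) = X (finRotate 3 s) := by
    intro t s
    show (sumAlgEquiv k (Fin 3) _) ((renameEquiv k (blockEquiv r m t)) (X (Sum.inl (t, s)))) = _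
    rw [renameEquiv_apply, rename_X, blockEquiv_inl_self r m t, sumAlgEquiv_X_inl]
  have heqvC : ∀ (t : Fin r) (x : k), eqv t (C x) = C (C x) := by
    intro t x
    show (sumAlgEquiv k (Fin 3) _) ((renameEquiv k (blockEquiv r m t)) (C x)) = _
    rw [renameEquiv_apply, rename_C, sumAlgEquiv_C']
  -- the h-part
  have heqvH : ∀ (t j : Fin r) (hne : ∀ q : {p : Fin r // j < p}, (q.1 : Fin r) ≠ t),
      eqv t (rename (Sum.map (fun q : { p : Fin r // j < p } × Fin 3 =>
          ((q.1 : Fin r), q.2)) id) (h j))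
        = C (rename (Sum.map (fun q : {p : Fin r // j < p} × Fin 3 =>
            ((⟨q.1.1, hne q.1⟩ : {p : Fin r // p ≠ t}), q.2)) id) (h j)) := by
    intro t j hne
    show (sumAlgEquiv k (Fin 3) _) ((renameEquiv k (blockEquiv r m t)) _) = _
    rw [renameEquiv_apply, rename_rename]
    rw [show (blockEquiv r m t) ∘ (Sum.map (fun q : {p : Fin r // j < p} × Fin 3 =>
        ((q.1 : Fin r), q.2)) id)
        = Sum.inr ∘ (Sum.map (fun q : {p : Fin r // j < p} × Fin 3 =>
            ((⟨q.1.1, hne q.1⟩ : {p : Fin r // p ≠ t}), q.2)) id) from funext ?_]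
    · exact sumAlgEquiv_rename_inr _ _
    · rintro (⟨⟨pp, hpp⟩, s⟩ | wv)
      · exact blockEquiv_inl_ne r m t (hne ⟨pp, hpp⟩) s
      · rfl
  have hG : ∀ (t j : Fin r), ∃ G : MvPolynomial (({p : Fin r // p ≠ t} × Fin 3) ⊕ Fin m) k,
      (t : ℕ) < (j : ℕ) → eqv t (F j) = C G := by
    intro t j
    by_cases hlt : (t : ℕ) < (j : ℕ)
    · have jne : j ≠ t := by
        intro hEq
        rw [hEq] at hlt
        omega
      have hne : ∀ q : {p : Fin r // j < p}, (q.1 : Fin r) ≠ t := by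
        intro q hEq
        have h2 := q.2
        rw [Fin.lt_def] at h2
        rw [hEq] at h2
        omega
      refine ⟨X (Sum.inl (⟨j, jne⟩, 0)) * X (Sum.inl (⟨j, jne⟩, 1)) ^ (d j - 1)
          + C (a j) * X (Sum.inl (⟨j, jne⟩, 1)) ^ (d j)
          + C (b j) * X (Sum.inl (⟨j, jne⟩, 2)) ^ (d j)
          + rename (Sum.map (fun q : {p : Fin r // j < p} × Fin 3 =>
              ((⟨q.1.1, hne q.1⟩ : {p : Fin r // p ≠ t}), q.2)) id) (h j), fun _ => ?_⟩
      simp only [hFdef]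
      simp only [map_add, map_mul, map_pow, heqvX_ne t jne, heqvC, heqvH t j hne]
    · exact ⟨0, fun hc => absurd hc hlt⟩
  choose G hGspec using hG
  have hcomp2 : ∀ t : Fin r,
      ∃ H : MvPolynomial (({p : Fin r // p ≠ t} × Fin 3) ⊕ Fin m) k,
      eqv t (F t) = X 1 * X 2 ^ (d t - 1) + C (C (a t)) * X 2 ^ (d t)
        + C (algebraMap k (MvPolynomial (({p : Fin r // p ≠ t} × Fin 3) ⊕ Fin m) k) (b t))
            * X 0 ^ (d t)
        + C H := by
    intro t
    have hne : ∀ q : {p : Fin r // t < p}, (q.1 : Fin r) ≠ t := by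
      intro q hEq
      have h2 := q.2
      rw [Fin.lt_def] at h2
      rw [hEq] at h2
      omega
    refine ⟨rename (Sum.map (fun q : {p : Fin r // t < p} × Fin 3 =>
        ((⟨q.1.1, hne q.1⟩ : {p : Fin r // p ≠ t}), q.2)) id) (h t), ?_⟩
    simp only [hFdef]
    simp only [map_add, map_mul, map_pow, heqvX_self, heqvC, heqvH t t hne]
    rw [show (finRotate 3) (0 : Fin 3) = 1 by decide, show (finRotate 3) (1 : Fin 3) = 2 by decide,
      show (finRotate 3) (2 : Fin 3) = 0 by decide, MvPolynomial.algebraMap_eq]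
  -- nonvanishing
  have hF0 : ∀ j : Fin r, F j ≠ 0 := by
    intro j hzero
    set φ : ((Fin r × Fin 3) ⊕ Fin m) → Polynomial k := fun v =>
      if v = Sum.inl (j, 2) then Polynomial.X else 0 with hφ
    have hz := congrArg (aeval φ) hzero
    rw [hFdef] at hz
    simp only [map_add, map_mul, map_pow, aeval_X, aeval_C, map_zero, aeval_rename] at hz
    rw [show φ (Sum.inl (j, 0)) = 0 by simp [hφ], show φ (Sum.inl (j, 1)) = 0 by simp [hφ],
      show φ (Sum.inl (j, 2)) = Polynomial.X by simp [hφ]] at hz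
    rw [show (φ ∘ (Sum.map (fun q : { p : Fin r // j < p } × Fin 3 => ((q.1 : Fin r), q.2)) id))
        = (fun _ => 0) from funext ?_] at hz
    swap
    · rintro (⟨⟨pp, hpp⟩, s⟩ | wv)
      · have : pp ≠ j := by
          intro hEq
          rw [Fin.lt_def] at hpp
          rw [hEq] at hpp
          omega
        simp [hφ, Sum.map, this]
      · simp [hφ, Sum.map]
    rw [aeval_zero'] at hz
    rw [zero_pow (by have := hpos j; omega : d j ≠ 0), zero_mul, mul_zero] at hz
    have hcf := congrArg (fun q : Polynomial k => q.coeff (d j)) hz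
    simp only [Polynomial.coeff_add, Polynomial.coeff_zero, zero_add, add_zero,
      Polynomial.coeff_C_mul, Polynomial.coeff_X_pow, if_pos rfl,
      MvPolynomial.algebraMap_eq] at hcf
    rw [show (algebraMap k (Polynomial k)) (constantCoeff (h j)) =
        Polynomial.C (constantCoeff (h j)) from rfl] at hcf
    rw [Polynomial.coeff_C, if_neg (by have := hpos j; omega : ¬ (d j = 0))] at hcf
    simp at hcf
    exact hb j hcf
  -- the main induction
  have main : ∀ i : Fin r, (Ideal.span (F '' {j | j ≤ i})).IsPrime ∧
      ∀ j : Fin r, i < j → F j ∉ Ideal.span (F '' {j' | j' ≤ i}) := by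
    intro i
    set J : ℕ → Ideal (MvPolynomial ((Fin r × Fin 3) ⊕ Fin m) k) := fun t =>
      Ideal.span (F '' {j | t ≤ (j : ℕ) ∧ j ≤ i}) with hJ
    have key : ∀ n t : ℕ, t + n = (i : ℕ) + 1 → (J t).IsPrime ∧
        ∀ j : Fin r, (i : ℕ) < (j : ℕ) → F j ∉ J t := by
      intro n
      induction n with
      | zero =>
        intro t ht
        have hempty : {j : Fin r | t ≤ (j : ℕ) ∧ j ≤ i} = ∅ := by
          ext j
          simp only [Set.mem_setOf_eq, Set.mem_empty_iff_false, iff_false, not_and]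
          intro h1 h2
          rw [Fin.le_def] at h2
          omega
        have hJbot : J t = ⊥ := by
          simp only [hJ, hempty, Set.image_empty, Ideal.span_empty]
        rw [hJbot]
        exact ⟨Ideal.bot_prime, fun j _ hj => hF0 j (by simpa using hj)⟩
      | succ n IH =>
        intro t ht
        have hti : t ≤ (i : ℕ) := by omega
        have htr : t < r := lt_of_le_of_lt hti i.isLt
        set tt : Fin r := ⟨t, htr⟩ with htt
        obtain ⟨IH1, IH2⟩ := IH (t + 1) (by omega)
        set A := MvPolynomial (({p : Fin r // p ≠ tt} × Fin 3) ⊕ Fin m) k with hA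
        set Et : MvPolynomial ((Fin r × Fin 3) ⊕ Fin m) k ≃+* MvPolynomial (Fin 3) A :=
          (eqv tt).toRingEquiv with hEt
        have hEtapp : ∀ x, Et x = eqv tt x := fun x => rfl
        have hsetsplit : {j : Fin r | t ≤ (j : ℕ) ∧ j ≤ i}
            = insert tt {j : Fin r | t + 1 ≤ (j : ℕ) ∧ j ≤ i} := by
          ext j
          simp only [Set.mem_setOf_eq, Set.mem_insert_iff, Fin.le_def, Fin.ext_iff, htt]
          omega
        have hJt : J t = Ideal.span {F tt} ⊔ J (t + 1) := by
          simp only [hJ]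
          rw [hsetsplit, Set.image_insert_eq, Ideal.span_insert]
        set p : Ideal A := Ideal.span (G tt '' {j : Fin r | t + 1 ≤ (j : ℕ) ∧ j ≤ i}) with hp
        have himg : ∀ j ∈ {j : Fin r | t + 1 ≤ (j : ℕ) ∧ j ≤ i},
            eqv tt (F j) = C (G tt j) := by
          intro j hj
          exact hGspec tt j (by
            have := hj.1
            simp only [htt]
            omega)
        have hmapJ1 : Ideal.map Et.toRingHom (J (t + 1))
            = p.map (C : A →+* MvPolynomial (Fin 3) A) := by
          simp only [hJ, hp]
          rw [Ideal.map_span, Ideal.map_span, ← Set.image_comp, ← Set.image_comp]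
          congr 1
          apply Set.image_congr
          intro j hj
          show Et (F j) = C (G tt j)
          rw [hEtapp]
          exact himg j hj
        have hpPrime : p.IsPrime := by
          apply isPrime_of_map_C
          rw [← hmapJ1]
          haveI := IH1
          rw [show (J (t+1)).map Et.toRingHom = (J (t+1)).comap Et.symm from
            Ideal.map_comap_of_equiv Et]
          exact Ideal.IsPrime.comap _
        obtain ⟨H, hH⟩ := hcomp2 tt
        have hlemD := lemD (k := k) (A := A) p hpPrime (d tt) (hpos tt) (C (a tt)) H (b tt)
          (hb tt)
        have hmapJt : Ideal.map Et.toRingHom (J t)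
            = Ideal.span {(X 1 * X 2 ^ (d tt - 1) + C (C (a tt)) * X 2 ^ (d tt)
                + C (algebraMap k A (b tt)) * X 0 ^ (d tt) + C H : MvPolynomial (Fin 3) A)}
              ⊔ p.map (C : A →+* MvPolynomial (Fin 3) A) := by
          rw [hJt, Ideal.map_sup, hmapJ1]
          congr 1
          rw [Ideal.map_span, Set.image_singleton]
          congr 1
          rw [Set.singleton_eq_singleton_iff]
          show eqv tt (F tt) = _
          exact hH
        constructor
        · apply prime_of_equiv_map_prime Et
          rw [hmapJt]
          exact hlemD.1
        · intro j hij hmem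
          have hij' : (t : ℕ) < (j : ℕ) := by omega
          have hEFj : eqv tt (F j) = C (G tt j) := hGspec tt j (by simp only [htt]; omega)
          have h1 : Et (F j) ∈ Ideal.map Et.toRingHom (J t) := (equiv_mem_map Et _ _).mpr hmem
          rw [hmapJt, hEtapp, hEFj] at h1
          have h2 : G tt j ∈ p := hlemD.2 (G tt j) h1
          have h3 : (C (G tt j) : MvPolynomial (Fin 3) A) ∈ p.map C :=
            (C_mem_map_C_iff p (G tt j)).mpr h2
          rw [← hmapJ1] at h3
          have h4 : F j ∈ J (t + 1) := by
            have := (equiv_mem_map Et (J (t + 1)) (F j))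
            rw [hEtapp, hEFj] at this
            exact this.mp h3
          exact IH2 j hij h4
    have h0 := key ((i : ℕ) + 1) 0 (by omega)
    have hset0 : {j : Fin r | 0 ≤ (j : ℕ) ∧ j ≤ i} = {j : Fin r | j ≤ i} := by
      ext j; simp
    simp only [hJ] at h0
    rw [hset0] at h0
    exact ⟨h0.1, fun j hij => h0.2 j hij⟩
  constructor
  · exact fun i => (main i).1
  · intro i j hij
    refine lt_of_le_of_ne (Ideal.span_mono (Set.image_mono (fun x hx => le_trans hx
      (le_of_lt hij)))) ?_
    intro hEq
    apply (main i).2 j hij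
    rw [hEq]
    exact Ideal.subset_span (Set.mem_image_of_mem F (le_refl j))
end
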